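/- arXiv:1004.1506 — 4 statements merged into one kernel-verified Lean document; each statement's English description precedes it below -/
import Mathlib

section
/- The Poincaré distance on the unit disc satisfies ω(z, w) = arctanh(|(z - w)/(1 - conj(w)·z)|) for all z, w ∈ Δ, where ω is the integrated distance of the infinitesimal Poincaré metric α(z, v) = |v|/(1 - |z|²). -/
open Complex Metric Set intervalIntegral

/-- The inverse hyperbolic tangent. -/
noncomputable def arctanh (x : ℝ) : ℝ := (1/2) * Real.log ((1 + x) / (1 - x))

/-- The infinitesimal Poincaré metric on the unit disc. -/
noncomputable def poincareMetric (z v : ℂ) : ℝ :=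
  ‖v‖ / (1 - ‖z‖^2)

/-- The length of a curve `γ : [0,1] → Δ` for the Poincaré metric. -/
noncomputable def poincareLength (γ : ℝ → ℂ) : ℝ :=
  ∫ t in (0:ℝ)..1, poincareMetric (γ t) (deriv γ t)

/-- The integrated Poincaré distance on the unit disc. -/
noncomputable def poincareDistance (z w : ℂ) : ℝ :=
  sInf {L : ℝ | ∃ γ : ℝ → ℂ, ContDiffOn ℝ 1 γ (Icc 0 1) ∧
    MapsTo γ (Icc 0 1) (ball 0 1) ∧ γ 0 = z ∧ γ 1 = w ∧ L = poincareLength γ}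

noncomputable def mobius (a ζ : ℂ) : ℂ := (ζ - a) / (1 - (starRingEnd ℂ) a * ζ)

lemma den_ne (a ζ : ℂ) (h : ‖a‖ * ‖ζ‖ < 1) :
    1 - (starRingEnd ℂ) a * ζ ≠ 0 := by
  intro hc
  have h1 : (starRingEnd ℂ) a * ζ = 1 := by linear_combination -hc
  have : ‖(starRingEnd ℂ) a * ζ‖ = 1 := by simp [h1]
  rw [norm_mul, Complex.norm_conj] at this
  linarith

lemma normSq_identity (a ζ : ℂ) :
    Complex.normSq (1 - (starRingEnd ℂ) a * ζ) - Complex.normSq (ζ - a)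
      = (1 - Complex.normSq a) * (1 - Complex.normSq ζ) := by
  simp only [Complex.normSq_apply, Complex.sub_re, Complex.sub_im, Complex.mul_re,
    Complex.mul_im, Complex.conj_re, Complex.conj_im, Complex.one_re, Complex.one_im]
  ring

lemma mobius_norm (a ζ : ℂ) (ha : ‖a‖ < 1) (hζ : ‖ζ‖ < 1) :
    1 - (‖mobius a ζ‖)^2 =
      (1 - (‖a‖)^2) * (1 - (‖ζ‖)^2)
        / (‖1 - (starRingEnd ℂ) a * ζ‖)^2 := by
  have hmul : ‖a‖ * ‖ζ‖ < 1 := by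
    nlinarith [norm_nonneg a, norm_nonneg ζ]
  have hden := den_ne a ζ hmul
  have hdenabs : (‖1 - (starRingEnd ℂ) a * ζ‖)^2 ≠ 0 :=
    pow_ne_zero 2 ((norm_ne_zero_iff.mpr hden))
  rw [mobius, norm_div, div_pow, eq_div_iff hdenabs, sub_mul, div_mul_cancel₀ _ hdenabs]
  simp only [Complex.sq_norm]
  linarith [normSq_identity a ζ]

lemma mobius_lt_one (a ζ : ℂ) (ha : ‖a‖ < 1) (hζ : ‖ζ‖ < 1) :
    ‖mobius a ζ‖ < 1 := by
  have h := mobius_norm a ζ ha hζ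
  have hmul : ‖a‖ * ‖ζ‖ < 1 := by
    nlinarith [norm_nonneg a, norm_nonneg ζ]
  have hden := den_ne a ζ hmul
  have hpos : 0 < (‖1 - (starRingEnd ℂ) a * ζ‖)^2 := by
    have h0 : ‖1 - (starRingEnd ℂ) a * ζ‖ ≠ 0 := (norm_ne_zero_iff.mpr hden)
    positivity
  have h1a : 0 < 1 - (‖a‖)^2 := by nlinarith [norm_nonneg a]
  have h1z : 0 < 1 - (‖ζ‖)^2 := by nlinarith [norm_nonneg ζ]
  have : 0 < 1 - (‖mobius a ζ‖)^2 := by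
    rw [h]; positivity
  nlinarith [norm_nonneg (mobius a ζ)]

lemma mobius_hasDerivAt (a ζ : ℂ) (h : 1 - (starRingEnd ℂ) a * ζ ≠ 0) :
    HasDerivAt (mobius a) ((1 - (starRingEnd ℂ) a * a) / (1 - (starRingEnd ℂ) a * ζ)^2) ζ := by
  have h1 : HasDerivAt (fun x : ℂ => x - a) 1 ζ := (hasDerivAt_id ζ).sub_const a
  have h2 : HasDerivAt (fun x : ℂ => 1 - (starRingEnd ℂ) a * x) (-(starRingEnd ℂ) a) ζ := by
    simpa using (((hasDerivAt_id ζ).const_mul ((starRingEnd ℂ) a)).const_sub 1)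
  have := h1.div h2 h
  refine this.congr_deriv ?_
  field_simp
  ring

lemma abs_one_sub_conj_mul_self (a : ℂ) (ha : ‖a‖ < 1) :
    ‖1 - (starRingEnd ℂ) a * a‖ = 1 - (‖a‖)^2 := by
  have : (starRingEnd ℂ) a * a = ((Complex.normSq a : ℝ) : ℂ) := by
    rw [mul_comm, Complex.mul_conj]
  rw [this, show ((Complex.normSq a : ℝ) : ℂ) = ((‖a‖ ^ 2 : ℝ) : ℂ) by
    rw [Complex.normSq_eq_norm_sq]]
  rw [← Complex.ofReal_one, ← Complex.ofReal_sub, Complex.norm_real, Real.norm_eq_abs, _root_.abs_of_nonneg]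
  nlinarith [norm_nonneg a]

lemma metric_invariance (u a ζ v : ℂ) (hu : ‖u‖ = 1)
    (ha : ‖a‖ < 1) (hζ : ‖ζ‖ < 1) :
    poincareMetric (u * mobius a ζ)
      (u * ((1 - (starRingEnd ℂ) a * a) / (1 - (starRingEnd ℂ) a * ζ)^2) * v)
      = poincareMetric ζ v := by
  have hmul : ‖a‖ * ‖ζ‖ < 1 := by
    nlinarith [norm_nonneg a, norm_nonneg ζ]
  have hden := den_ne a ζ hmul
  have hdenabs : (0:ℝ) < ‖1 - (starRingEnd ℂ) a * ζ‖ :=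
    norm_pos_iff.mpr hden
  have h1a : (0:ℝ) < 1 - (‖a‖)^2 := by nlinarith [norm_nonneg a]
  have h1z : (0:ℝ) < 1 - (‖ζ‖)^2 := by nlinarith [norm_nonneg ζ]
  unfold poincareMetric
  rw [norm_mul, norm_mul, norm_mul, hu, one_mul, one_mul, norm_div, norm_pow,
    abs_one_sub_conj_mul_self a ha, mobius_norm a ζ ha hζ]
  field_simp

lemma arctanh_zero : arctanh 0 = 0 := by simp [arctanh]

lemma arctanh_hasDerivAt (x : ℝ) (h : |x| < 1) :
    HasDerivAt arctanh (1 / (1 - x^2)) x := by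
  have h1 : (0:ℝ) < 1 - x := by cases abs_lt.1 h; linarith
  have h2 : (0:ℝ) < 1 + x := by cases abs_lt.1 h; linarith
  have hd : HasDerivAt (fun y : ℝ => (1 + y) / (1 - y)) (2 / (1 - x)^2) x := by
    have hn : HasDerivAt (fun y : ℝ => 1 + y) 1 x := (hasDerivAt_id x).const_add 1
    have hm : HasDerivAt (fun y : ℝ => 1 - y) (-1) x := by
      simpa using (hasDerivAt_id x).const_sub 1
    have := hn.div hm h1.ne'
    refine this.congr_deriv ?_
    field_simp
    ring
  have hpos : (1 + x) / (1 - x) ≠ 0 := by positivity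
  have h3 : (1:ℝ) - x^2 ≠ 0 := by nlinarith
  have := (hd.log hpos).const_mul (1/2 : ℝ)
  refine this.congr_deriv ?_
  field_simp
  ring

lemma exists_curve (z w : ℂ) (hz : ‖z‖ < 1) (hw : ‖w‖ < 1) :
    ∃ γ : ℝ → ℂ, ContDiffOn ℝ 1 γ (Icc 0 1) ∧ MapsTo γ (Icc 0 1) (ball 0 1) ∧
      γ 0 = z ∧ γ 1 = w ∧ poincareLength γ = arctanh (‖mobius z w‖) := by
  set p : ℂ := mobius z w with hpdef
  set ρ : ℝ := ‖p‖ with hrdef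
  have hρ0 : 0 ≤ ρ := norm_nonneg p
  have hρ : ρ < 1 := mobius_lt_one z w hz hw
  have hzneg : ‖-z‖ < 1 := by simpa using hz
  -- basic facts for t ∈ [0,1]
  have habs : ∀ t : ℝ, ‖(t:ℂ) * p‖ = |t| * ρ := by
    intro t; rw [norm_mul, Complex.norm_real, Real.norm_eq_abs]
  have hsmall : ∀ t ∈ Icc (0:ℝ) 1, ‖(t:ℂ) * p‖ < 1 := by
    intro t ht
    rw [habs, _root_.abs_of_nonneg ht.1]
    nlinarith [ht.2]
  have hden : ∀ t ∈ Icc (0:ℝ) 1, 1 - (starRingEnd ℂ) (-z) * ((t:ℂ) * p) ≠ 0 := by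
    intro t ht
    refine den_ne _ _ ?_
    have := hsmall t ht
    have h1 : ‖-z‖ ≤ 1 := le_of_lt hzneg
    nlinarith [norm_nonneg ((t:ℂ)*p), norm_nonneg (-z), hzneg]
  set γ : ℝ → ℂ := fun t => mobius (-z) ((t:ℂ) * p) with hγdef
  have hγ0 : γ 0 = z := by simp [hγdef, mobius]
  have hdzw : 1 - (starRingEnd ℂ) z * w ≠ 0 := by
    refine den_ne _ _ ?_
    nlinarith [norm_nonneg z, norm_nonneg w]
  have hd1 : 1 - (starRingEnd ℂ) (-z) * p ≠ 0 := by
    refine den_ne _ _ ?_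
    nlinarith [norm_nonneg (-z), norm_nonneg p, hzneg]
  have hγ1 : γ 1 = w := by
    show mobius (-z) ((1:ℝ) * p : ℂ) = w
    rw [Complex.ofReal_one, one_mul, mobius]
    rw [hpdef, mobius] at hd1 ⊢
    rw [div_eq_iff hd1]
    rw [map_neg]; field_simp [hdzw, (mul_comm ((starRingEnd ℂ) z) w ▸ hdzw : 1 - w * (starRingEnd ℂ) z ≠ 0)]
    ring
  -- smoothness
  have hone : ContDiff ℝ 1 (fun t : ℝ => ((t:ℂ))) := Complex.ofRealCLM.contDiff
  have hnum : ContDiff ℝ 1 (fun t : ℝ => (t:ℂ) * p - (-z)) :=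
    (hone.mul contDiff_const).sub contDiff_const
  have hdenc : ContDiff ℝ 1 (fun t : ℝ => 1 - (starRingEnd ℂ) (-z) * ((t:ℂ) * p)) :=
    contDiff_const.sub (contDiff_const.mul (hone.mul contDiff_const))
  have hsmooth : ContDiffOn ℝ 1 γ (Icc 0 1) := by
    have h := (hnum.contDiffOn).mul ((hdenc.contDiffOn).inv hden)
    refine h.congr (fun t ht => ?_); simp [hγdef, mobius, div_eq_mul_inv]
  -- maps to ball
  have hmaps : MapsTo γ (Icc 0 1) (ball 0 1) := by
    intro t ht
    have := mobius_lt_one (-z) ((t:ℂ)*p) hzneg (hsmall t ht)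
    simpa [hγdef, mem_ball, Complex.dist_eq] using this
  -- derivative
  have hderiv : ∀ t ∈ Icc (0:ℝ) 1, HasDerivAt γ
      ((1 - (starRingEnd ℂ) (-z) * (-z)) / (1 - (starRingEnd ℂ) (-z) * ((t:ℂ) * p))^2 * p) t := by
    intro t ht
    have h1 : HasDerivAt (fun ζ : ℂ => ζ * p) p (t:ℂ) := by
      simpa using (hasDerivAt_id ((t:ℂ))).mul_const p
    have h2 := (mobius_hasDerivAt (-z) ((t:ℂ)*p) (hden t ht)).comp ((t:ℂ)) h1
    exact h2.comp_ofReal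
  -- length
  have hlen : poincareLength γ = arctanh ρ := by
    have hEq : EqOn (fun t => poincareMetric (γ t) (deriv γ t))
        (fun t => ρ * (1 / (1 - (ρ * t)^2))) (uIcc 0 1) := by
      intro t ht
      rw [uIcc_of_le (by norm_num : (0:ℝ) ≤ 1)] at ht
      have hd := hderiv t ht
      have : deriv γ t = (1 - (starRingEnd ℂ) (-z) * (-z)) / (1 - (starRingEnd ℂ) (-z) * ((t:ℂ) * p))^2 * p := hd.deriv
      show poincareMetric (γ t) (deriv γ t) = ρ * (1 / (1 - (ρ * t)^2))
      rw [this]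
      have hinv := metric_invariance 1 (-z) ((t:ℂ)*p) p (by simp) hzneg (hsmall t ht)
      rw [one_mul, one_mul] at hinv
      rw [hγdef]
      show poincareMetric (mobius (-z) ((t:ℂ)*p)) _ = _
      rw [hinv]
      rw [poincareMetric, habs t, _root_.abs_of_nonneg ht.1]
      have h5 : 0 ≤ t * ρ := mul_nonneg ht.1 hρ0
      have h6 : t * ρ < 1 := by nlinarith [ht.2]
      have h2 : (1:ℝ) - (t * ρ)^2 ≠ 0 := by nlinarith
      rw [← hrdef]
      have h2' : (1:ℝ) - ρ^2 * t^2 ≠ 0 := by nlinarith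
      rw [mul_comm t ρ]
      ring
    rw [poincareLength, integral_congr hEq]
    have hG : ∀ t ∈ uIcc (0:ℝ) 1, HasDerivAt (fun s => arctanh (ρ * s))
        (ρ * (1 / (1 - (ρ * t)^2))) t := by
      intro t ht
      rw [uIcc_of_le (by norm_num : (0:ℝ) ≤ 1)] at ht
      have habs2 : |ρ * t| < 1 := by
        rw [abs_mul, _root_.abs_of_nonneg hρ0, _root_.abs_of_nonneg ht.1]
        nlinarith [ht.2]
      have h1 : HasDerivAt (fun s : ℝ => ρ * s) ρ t := by
        simpa using (hasDerivAt_id t).const_mul ρ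
      have := (arctanh_hasDerivAt (ρ * t) habs2).comp t h1
      refine this.congr_deriv ?_
      ring
    have hint : IntervalIntegrable (fun t => ρ * (1 / (1 - (ρ * t)^2))) MeasureTheory.volume 0 1 := by
      apply ContinuousOn.intervalIntegrable
      apply ContinuousOn.mul continuousOn_const
      apply ContinuousOn.div continuousOn_const
      · fun_prop
      · intro t ht
        rw [uIcc_of_le (by norm_num : (0:ℝ) ≤ 1)] at ht
        have h5 : 0 ≤ ρ * t := mul_nonneg hρ0 ht.1
        have h6 : ρ * t < 1 := by nlinarith [ht.2]
        nlinarith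
    rw [integral_eq_sub_of_hasDerivAt hG hint]
    simp [arctanh_zero]
  exact ⟨γ, hsmooth, hmaps, hγ0, hγ1, hlen⟩

lemma length_lower_bound (z w : ℂ) (hz : ‖z‖ < 1) (hw : ‖w‖ < 1)
    (γ : ℝ → ℂ) (hsm : ContDiffOn ℝ 1 γ (Icc 0 1)) (hmap : MapsTo γ (Icc 0 1) (ball 0 1))
    (h0 : γ 0 = z) (h1 : γ 1 = w) :
    arctanh (‖mobius z w‖) ≤ poincareLength γ := by
  have habsγ : ∀ t ∈ Icc (0:ℝ) 1, ‖γ t‖ < 1 := by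
    intro t ht
    have := hmap ht
    simpa [mem_ball, Complex.dist_eq] using this
  set p : ℂ := mobius z w with hpdef
  set ρ : ℝ := ‖p‖ with hrdef
  have hρ0 : 0 ≤ ρ := norm_nonneg p
  have hρ : ρ < 1 := mobius_lt_one z w hz hw
  set u : ℂ := if p = 0 then 1 else (ρ:ℂ)/p with hudef
  have hu : ‖u‖ = 1 := by
    rw [hudef]
    split_ifs with h
    · simp
    · rw [norm_div, Complex.norm_real, Real.norm_eq_abs, _root_.abs_of_nonneg hρ0, ← hrdef,
        div_self (by simpa [hrdef] using h)]
  have hup : u * p = (ρ:ℂ) := by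
    rw [hudef]
    split_ifs with h
    · simp [h, hrdef]
    · field_simp
  set D : ℝ → ℂ := fun t => derivWithin γ (Icc 0 1) t with hDdef
  have hD : ContinuousOn D (Icc 0 1) :=
    hsm.continuousOn_derivWithin (uniqueDiffOn_Icc (by norm_num)) le_rfl
  have hγdiff : ∀ t ∈ Ioo (0:ℝ) 1, HasDerivAt γ (D t) t := by
    intro t ht
    have hmem : Icc (0:ℝ) 1 ∈ nhds t := Icc_mem_nhds ht.1 ht.2
    have hd := ((hsm t (Ioo_subset_Icc_self ht)).differentiableWithinAt
      one_ne_zero).differentiableAt hmem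
    have : D t = deriv γ t := derivWithin_of_mem_nhds hmem
    rw [this]
    exact hd.hasDerivAt
  have hdenγ : ∀ t ∈ Icc (0:ℝ) 1, 1 - (starRingEnd ℂ) z * γ t ≠ 0 := by
    intro t ht
    refine den_ne _ _ ?_
    nlinarith [norm_nonneg z, norm_nonneg (γ t), habsγ t ht]
  set f : ℝ → ℂ := fun t => u * mobius z (γ t) with hfdef
  set E : ℝ → ℂ := fun t =>
    u * ((1 - (starRingEnd ℂ) z * z) / (1 - (starRingEnd ℂ) z * γ t)^2) * D t with hEdef
  have hf : ∀ t ∈ Ioo (0:ℝ) 1, HasDerivAt f (E t) t := by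
    intro t ht
    have hin : HasDerivAt (fun ζ : ℂ => u * mobius z ζ)
        (u * ((1 - (starRingEnd ℂ) z * z) / (1 - (starRingEnd ℂ) z * γ t)^2)) (γ t) :=
      (mobius_hasDerivAt z (γ t) (hdenγ t (Ioo_subset_Icc_self ht))).const_mul u
    have h2 := hin.scomp t (hγdiff t ht)
    have h3 : HasDerivAt f (D t • (u * ((1 - (starRingEnd ℂ) z * z) /
        (1 - (starRingEnd ℂ) z * γ t)^2))) t := h2
    rw [smul_eq_mul] at h3
    convert h3 using 1
    rw [hEdef]
    ring
  have hfabs : ∀ t ∈ Icc (0:ℝ) 1, ‖f t‖ < 1 := by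
    intro t ht
    rw [hfdef]
    show ‖u * mobius z (γ t)‖ < 1
    rw [norm_mul, hu, one_mul]
    exact mobius_lt_one z (γ t) hz (habsγ t ht)
  set x : ℝ → ℝ := fun t => (f t).re with hxdef
  have hx : ∀ t ∈ Ioo (0:ℝ) 1, HasDerivAt x ((E t).re) t := by
    intro t ht
    have := (Complex.reCLM.hasFDerivAt.comp t (hf t ht).hasFDerivAt).hasDerivAt
    exact this.congr_deriv (by simp)
  have hxlt : ∀ t ∈ Icc (0:ℝ) 1, |x t| < 1 := by
    intro t ht
    exact lt_of_le_of_lt (Complex.abs_re_le_norm (f t)) (hfabs t ht)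
  set G' : ℝ → ℝ := fun t => (1/(1 - (x t)^2)) * (E t).re with hG'def
  have hGderiv : ∀ t ∈ Ioo (0:ℝ) 1, HasDerivAt (fun s => arctanh (x s)) (G' t) t := by
    intro t ht
    exact (arctanh_hasDerivAt (x t) (hxlt t (Ioo_subset_Icc_self ht))).comp t (hx t ht)
  have hfc : ContinuousOn f (Icc 0 1) := by
    have h : ContinuousOn (fun t => u * ((γ t - z) / (1 - (starRingEnd ℂ) z * γ t)))
        (Icc (0:ℝ) 1) :=
      continuousOn_const.mul ((hsm.continuousOn.sub continuousOn_const).div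
        (continuousOn_const.sub (continuousOn_const.mul hsm.continuousOn)) hdenγ)
    exact h
  have hxc : ContinuousOn x (Icc 0 1) := Complex.continuous_re.comp_continuousOn hfc
  have hEc : ContinuousOn E (Icc 0 1) :=
    (continuousOn_const.mul (continuousOn_const.div
      (((continuousOn_const.sub (continuousOn_const.mul hsm.continuousOn))).pow 2)
      (fun t ht => pow_ne_zero 2 (hdenγ t ht)))).mul hD
  have hGcont : ContinuousOn (fun s => arctanh (x s)) (Icc 0 1) := by
    intro t ht
    exact ((arctanh_hasDerivAt (x t) (hxlt t ht)).continuousAt).comp_continuousWithinAt (hxc t ht)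
  have hxsq : ∀ t ∈ Icc (0:ℝ) 1, (0:ℝ) < 1 - (x t)^2 := by
    intro t ht
    have h7 := hxlt t ht
    nlinarith [abs_nonneg (x t), _root_.sq_abs (x t)]
  have hG'c : ContinuousOn G' (Icc 0 1) :=
    (continuousOn_const.div (continuousOn_const.sub (hxc.pow 2))
      (fun t ht => (hxsq t ht).ne')).mul (Complex.continuous_re.comp_continuousOn hEc)
  have hG'int : IntervalIntegrable G' MeasureTheory.volume 0 1 := by
    apply ContinuousOn.intervalIntegrable
    rwa [uIcc_of_le (by norm_num : (0:ℝ) ≤ 1)]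
  have hFTC : ∫ t in (0:ℝ)..1, G' t = arctanh (x 1) - arctanh (x 0) :=
    integral_eq_sub_of_hasDeriv_right_of_le (by norm_num) hGcont
      (fun t ht => (hGderiv t ht).hasDerivWithinAt) hG'int
  have hx1 : x 1 = ρ := by
    show (f 1).re = ρ
    have : f 1 = (ρ:ℂ) := by
      show u * mobius z (γ 1) = (ρ:ℂ)
      rw [h1, ← hpdef, hup]
    rw [this, Complex.ofReal_re]
  have hx0 : x 0 = 0 := by
    show (f 0).re = 0
    have : f 0 = 0 := by
      show u * mobius z (γ 0) = 0
      rw [h0]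
      simp [mobius]
    rw [this, Complex.zero_re]
  have hF : ∀ t ∈ Icc (0:ℝ) 1, G' t ≤ poincareMetric (γ t) (D t) := by
    intro t ht
    have hinv := metric_invariance u z (γ t) (D t) hu hz (habsγ t ht)
    rw [← hinv]
    have hA : (0:ℝ) < 1 - (‖f t‖)^2 := by
      have h8 := hfabs t ht
      nlinarith [norm_nonneg (f t)]
    have hAB : 1 - (‖f t‖)^2 ≤ 1 - (x t)^2 := by
      have h7 : |x t| ≤ ‖f t‖ := Complex.abs_re_le_norm (f t)
      nlinarith [abs_nonneg (x t), _root_.sq_abs (x t)]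
    have hrhs : poincareMetric (u * mobius z (γ t))
        (u * ((1 - (starRingEnd ℂ) z * z) / (1 - (starRingEnd ℂ) z * γ t)^2) * D t)
        = ‖E t‖ / (1 - (‖f t‖)^2) := rfl
    rw [hrhs]
    by_cases hE : (E t).re ≤ 0
    · have hle : G' t ≤ 0 := by
        rw [hG'def]
        exact mul_nonpos_of_nonneg_of_nonpos (le_of_lt (one_div_pos.2 (hxsq t ht))) hE
      have : (0:ℝ) ≤ ‖E t‖ / (1 - (‖f t‖)^2) :=
        div_nonneg (norm_nonneg (E t)) hA.le
      linarith
    · push_neg at hE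
      have heq : G' t = (E t).re / (1 - (x t)^2) := by rw [hG'def]; ring
      rw [heq]
      exact div_le_div₀ (norm_nonneg (E t)) (Complex.re_le_norm (E t)) hA hAB
  have hFc : ContinuousOn (fun t => poincareMetric (γ t) (D t)) (Icc 0 1) :=
    (continuous_norm.comp_continuousOn hD).div
      (continuousOn_const.sub ((continuous_norm.comp_continuousOn hsm.continuousOn).pow 2))
      (fun t ht => by nlinarith [habsγ t ht, norm_nonneg (γ t)])
  have hFint : IntervalIntegrable (fun t => poincareMetric (γ t) (D t))
      MeasureTheory.volume 0 1 := by
    apply ContinuousOn.intervalIntegrable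
    rwa [uIcc_of_le (by norm_num : (0:ℝ) ≤ 1)]
  have hmono := intervalIntegral.integral_mono_on (by norm_num : (0:ℝ) ≤ 1) hG'int hFint hF
  have hcongr : poincareLength γ = ∫ t in (0:ℝ)..1, poincareMetric (γ t) (D t) := by
    rw [poincareLength]
    apply integral_congr_ae
    have hae : ∀ᵐ t : ℝ ∂MeasureTheory.volume, t ≠ 1 := by
      rw [MeasureTheory.ae_iff]
      simp only [ne_eq, not_not, setOf_eq_eq_singleton]
      exact MeasureTheory.measure_singleton 1
    filter_upwards [hae] with t ht1 htI
    rw [uIoc_of_le (by norm_num : (0:ℝ) ≤ 1)] at htI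
    have ht' : t ∈ Ioo (0:ℝ) 1 := ⟨htI.1, lt_of_le_of_ne htI.2 ht1⟩
    have hdd : deriv γ t = D t :=
      (derivWithin_of_mem_nhds (Icc_mem_nhds ht'.1 ht'.2)).symm
    rw [hdd]
  calc arctanh ρ = ∫ t in (0:ℝ)..1, G' t := by
        rw [hFTC, hx1, hx0, arctanh_zero, sub_zero]
    _ ≤ ∫ t in (0:ℝ)..1, poincareMetric (γ t) (D t) := hmono
    _ = poincareLength γ := hcongr.symm


lemma abs_mobius_symm (z w : ℂ) :
    ‖(z - w) / (1 - (starRingEnd ℂ) w * z)‖ = ‖mobius z w‖ := by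
  rw [mobius, norm_div, norm_div, norm_sub_rev z w]
  congr 1
  rw [← Complex.norm_conj (1 - (starRingEnd ℂ) w * z)]
  congr 1
  rw [map_sub, map_one, map_mul, Complex.conj_conj]
  ring

theorem poincare_distance_formula (z w : ℂ)
    (hz : z ∈ ball (0 : ℂ) 1) (hw : w ∈ ball (0 : ℂ) 1) :
    poincareDistance z w =
      arctanh ‖(z - w) / (1 - (starRingEnd ℂ) w * z)‖ := by
  have hz' : ‖z‖ < 1 := by simpa [mem_ball, Complex.dist_eq] using hz
  have hw' : ‖w‖ < 1 := by simpa [mem_ball, Complex.dist_eq] using hw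
  rw [abs_mobius_symm]
  obtain ⟨γ₀, h₁, h₂, h₃, h₄, h₅⟩ := exists_curve z w hz' hw'
  have hmem : arctanh (‖mobius z w‖) ∈
      {L : ℝ | ∃ γ : ℝ → ℂ, ContDiffOn ℝ 1 γ (Icc 0 1) ∧
        MapsTo γ (Icc 0 1) (ball 0 1) ∧ γ 0 = z ∧ γ 1 = w ∧ L = poincareLength γ} :=
    ⟨γ₀, h₁, h₂, h₃, h₄, h₅.symm⟩
  have hlb : ∀ L ∈ {L : ℝ | ∃ γ : ℝ → ℂ, ContDiffOn ℝ 1 γ (Icc 0 1) ∧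
        MapsTo γ (Icc 0 1) (ball 0 1) ∧ γ 0 = z ∧ γ 1 = w ∧ L = poincareLength γ},
      arctanh (‖mobius z w‖) ≤ L := by
    rintro L ⟨γ, ha, hb, hc, hd, rfl⟩
    exact length_lower_bound z w hz' hw' γ ha hb hc hd
  exact le_antisymm (csInf_le ⟨_, hlb⟩ hmem) (le_csInf ⟨_, hmem⟩ hlb)
end

section
/- Let D be a bounded domain in ℂⁿ and f: D → D holomorphic such that f(D) is relatively compact in D. Then there exists a constant k < 1 such that f is k-Lipschitz for the integrated Carathéodory distance c^i_D; consequently f has a unique fixed point a ∈ D, and for every z₀ ∈ D the iterates fⁿ(z₀) converge to a. -/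
open Complex Metric Set Filter

/-- The infinitesimal Carathéodory metric of a domain `D`. -/
noncomputable def caratheodoryMetric {E : Type*} [NormedAddCommGroup E] [NormedSpace ℂ E]
    (D : Set E) (z : E) (v : E) : ℝ :=
  sSup {c : ℝ | ∃ φ : E → ℂ, DifferentiableOn ℂ φ D ∧ MapsTo φ D (ball 0 1) ∧
    c = ‖fderiv ℂ φ z v‖ / (1 - (‖φ z‖)^2)}

/-- The integrated Carathéodory distance of a domain `D`. -/
noncomputable def caratheodoryIntDist {E : Type*} [NormedAddCommGroup E] [NormedSpace ℂ E]
    (D : Set E) (z w : E) : ℝ :=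
  sInf {L : ℝ | ∃ γ : ℝ → E, ContDiffOn ℝ 1 γ (Icc 0 1) ∧
    MapsTo γ (Icc 0 1) D ∧ γ 0 = z ∧ γ 1 = w ∧
    L = ∫ t in (0:ℝ)..1, caratheodoryMetric D (γ t) (deriv γ t)}

open MeasureTheory Topology

section EH

noncomputable def EHmob (a w : ℂ) : ℂ := (a - w) / (1 - (starRingEnd ℂ) a * w)

lemma EHmob_denom_ne (a w : ℂ) (ha : ‖a‖ < 1) (hw : ‖w‖ < 1) :
    1 - (starRingEnd ℂ) a * w ≠ 0 := by
  intro h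
  have : ‖(starRingEnd ℂ) a * w‖ < 1 := by
    rw [norm_mul, Complex.norm_conj]
    nlinarith [norm_nonneg a, norm_nonneg w]
  have h1 : (starRingEnd ℂ) a * w = 1 := by linear_combination -h
  rw [h1] at this
  simp at this

lemma EHmob_normSq_identity (a w : ℂ) :
    normSq (1 - (starRingEnd ℂ) a * w) - normSq (a - w) = (1 - normSq a) * (1 - normSq w) := by
  simp [Complex.normSq_apply, Complex.sub_re, Complex.sub_im, Complex.mul_re, Complex.mul_im,
    Complex.conj_re, Complex.conj_im]
  ring

lemma EHmob_maps (a w : ℂ) (ha : ‖a‖ < 1) (hw : ‖w‖ < 1) :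
    ‖EHmob a w‖ < 1 := by
  have hden := EHmob_denom_ne a w ha hw
  have hdpos : 0 < normSq (1 - (starRingEnd ℂ) a * w) := normSq_pos.2 hden
  have hid := EHmob_normSq_identity a w
  have ha2 : normSq a < 1 := by rw [← Complex.sq_norm]; nlinarith [norm_nonneg a]
  have hw2 : normSq w < 1 := by rw [← Complex.sq_norm]; nlinarith [norm_nonneg w]
  have hlt : normSq (a - w) < normSq (1 - (starRingEnd ℂ) a * w) := by nlinarith
  have : ‖EHmob a w‖ ^ 2 < 1 := by
    rw [EHmob, norm_div, div_pow, Complex.sq_norm, Complex.sq_norm]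
    rw [div_lt_one hdpos]; exact hlt
  nlinarith [norm_nonneg (EHmob a w)]

lemma EHmob_differentiableAt (a w : ℂ) (ha : ‖a‖ < 1) (hw : ‖w‖ < 1) :
    DifferentiableAt ℂ (EHmob a) w := by
  apply DifferentiableAt.div
  · exact (differentiableAt_const a).sub differentiableAt_id
  · exact (differentiableAt_const 1).sub ((differentiableAt_const _).mul differentiableAt_id)
  · exact EHmob_denom_ne a w ha hw

lemma EHmob_hasDerivAt (a : ℂ) (ha : ‖a‖ < 1) :
    HasDerivAt (EHmob a) (-(1 - (normSq a : ℂ))⁻¹) a := by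
  have hden : (1 : ℂ) - (starRingEnd ℂ) a * a ≠ 0 := EHmob_denom_ne a a ha ha
  have h1 : HasDerivAt (fun w : ℂ => a - w) (-1) a := by
    exact (hasDerivAt_id a).const_sub a
  have h2 : HasDerivAt (fun w : ℂ => 1 - (starRingEnd ℂ) a * w) (-(starRingEnd ℂ) a) a := by
    refine (((hasDerivAt_id a).const_mul ((starRingEnd ℂ) a)).const_sub (1:ℂ)).congr_deriv ?_; ring
  have := h1.div h2 hden
  refine HasDerivAt.congr_deriv this ?_
  have hca : (starRingEnd ℂ) a * a = (normSq a : ℂ) := by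
    simpa [mul_comm] using Complex.mul_conj a
  rw [hca]
  have hs : (1 : ℂ) - (normSq a : ℂ) ≠ 0 := by rwa [hca] at hden
  field_simp
  ring


variable {F : Type*} [NormedAddCommGroup F] [NormedSpace ℂ F]

def EHcand (D : Set F) (z v : F) : Set ℝ :=
  {c : ℝ | ∃ φ : F → ℂ, DifferentiableOn ℂ φ D ∧ MapsTo φ D (ball 0 1) ∧
    c = ‖fderiv ℂ φ z v‖ / (1 - (‖φ z‖)^2)}

lemma caratheodoryMetric_eq (D : Set F) (z v : F) :
    caratheodoryMetric D z v = sSup (EHcand D z v) := rfl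

lemma EHcand_zero_mem (D : Set F) (z v : F) : (0:ℝ) ∈ EHcand D z v := by
  refine ⟨fun _ => 0, differentiableOn_const 0, fun x _ => mem_ball_self one_pos, ?_⟩
  simp [fderiv_const]

lemma EH_abs_lt_one {D : Set F} {φ : F → ℂ} (hφm : MapsTo φ D (ball 0 1)) {z : F} (hz : z ∈ D) :
    ‖φ z‖ < 1 := by
  have := hφm hz
  rwa [mem_ball_zero_iff] at this

lemma EH_cand_le {D : Set F} {z v : F} {ρ : ℝ} (hρ : 0 < ρ) (hball : ball z ρ ⊆ D)
    (φ : F → ℂ) (hφd : DifferentiableOn ℂ φ D) (hφm : MapsTo φ D (ball 0 1)) :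
    ‖fderiv ℂ φ z v‖ / (1 - (‖φ z‖)^2) ≤ ‖v‖ / ρ := by
  have hz : z ∈ D := hball (mem_ball_self hρ)
  have ha : ‖φ z‖ < 1 := EH_abs_lt_one hφm hz
  have hden : (0:ℝ) < 1 - (‖φ z‖)^2 := by nlinarith [norm_nonneg (φ z)]
  rcases eq_or_ne v 0 with rfl | hv
  · simp [div_nonneg, hρ.le]
  have hvn : (0:ℝ) < ‖v‖ := norm_pos_iff.2 hv
  set a := φ z with ha_def
  set r := ρ / ‖v‖ with hr_def
  have hrpos : 0 < r := div_pos hρ hvn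
  set ψ : ℂ → ℂ := fun ζ => EHmob a (φ (z + ζ • v)) with hψ
  -- points in the ball
  have hmem : ∀ ζ : ℂ, ζ ∈ ball (0:ℂ) r → z + ζ • v ∈ ball z ρ := by
    intro ζ hζ
    rw [mem_ball_zero_iff] at hζ
    rw [mem_ball, dist_eq_norm]
    have he : z + ζ • v - z = ζ • v := by abel
    rw [he, norm_smul]
    calc ‖ζ‖ * ‖v‖ < r * ‖v‖ := by exact mul_lt_mul_of_pos_right hζ hvn
    _ = ρ := by rw [hr_def]; field_simp
  have hψd : DifferentiableOn ℂ ψ (ball (0:ℂ) r) := by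
    intro ζ hζ
    have hp : z + ζ • v ∈ ball z ρ := hmem ζ hζ
    have h1 : DifferentiableAt ℂ (fun ζ : ℂ => z + ζ • v) ζ := by
      exact (differentiableAt_id.smul_const v).const_add z
    have h2 : DifferentiableAt ℂ φ (z + ζ • v) :=
      (hφd.mono hball).differentiableAt (isOpen_ball.mem_nhds hp)
    have h3 : DifferentiableAt ℂ (EHmob a) (φ (z + ζ • v)) :=
      EHmob_differentiableAt a _ ha (EH_abs_lt_one hφm (hball hp))
    exact ((h3.comp _ h2).comp ζ h1).differentiableWithinAt
  have hψ0 : ψ 0 = 0 := by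
    simp only [hψ, zero_smul, add_zero, EHmob, ← ha_def, sub_self, zero_div]
  have hψm : MapsTo ψ (ball (0:ℂ) r) (ball (ψ 0) 1) := by
    intro ζ hζ
    rw [hψ0, mem_ball_zero_iff]
    exact EHmob_maps a _ ha (EH_abs_lt_one hφm (hball (hmem ζ hζ)))
  have hSch : ‖deriv ψ 0‖ ≤ 1 / r :=
    Complex.norm_deriv_le_div_of_mapsTo_ball hψd (hψm.mono_right ball_subset_closedBall) hrpos
  -- compute deriv ψ 0
  have hinner : HasDerivAt (fun ζ : ℂ => z + ζ • v) v 0 := by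
    simpa using ((hasDerivAt_id (0:ℂ)).smul_const v).const_add z
  have hφat : HasFDerivAt φ (fderiv ℂ φ z) z := by
    exact ((hφd.mono hball).differentiableAt (isOpen_ball.mem_nhds (mem_ball_self hρ))).hasFDerivAt
  have hφat' : HasFDerivAt φ (fderiv ℂ φ z) (z + (0:ℂ) • v) := by
    rw [show z + (0:ℂ) • v = z by simp]
    exact hφat
  have hcomp1 : HasDerivAt (fun ζ : ℂ => φ (z + ζ • v)) (fderiv ℂ φ z v) 0 :=
    hφat'.comp_hasDerivAt 0 hinner
  have hmderiv : HasDerivAt (EHmob a) (-(1 - (normSq a : ℂ))⁻¹) a := EHmob_hasDerivAt a ha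
  have hmderiv' : HasDerivAt (EHmob a) (-(1 - (normSq a : ℂ))⁻¹) (φ (z + (0:ℂ) • v)) := by
    rw [show z + (0:ℂ) • v = z by simp]
    exact hmderiv
  have hψder : HasDerivAt ψ (-(1 - (normSq a : ℂ))⁻¹ * fderiv ℂ φ z v) 0 :=
    by have := hmderiv'.comp 0 hcomp1; exact this
  have hderiv_eq : deriv ψ 0 = -(1 - (normSq a : ℂ))⁻¹ * fderiv ℂ φ z v := hψder.deriv
  have hns : (1:ℝ) - normSq a = 1 - (‖a‖)^2 := by rw [Complex.sq_norm]
  have habs : ‖deriv ψ 0‖ = (1 - (‖a‖)^2)⁻¹ * ‖fderiv ℂ φ z v‖ := by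
    rw [hderiv_eq]
    rw [norm_mul, norm_neg, norm_inv]
    congr 1
    congr 1
    have : ((1:ℂ) - (normSq a : ℂ)) = ((1 - normSq a : ℝ) : ℂ) := by push_cast; ring
    rw [this, Complex.norm_real, Real.norm_eq_abs, abs_of_pos]
    · rw [hns]
    · rw [hns]; exact hden
  have h1r : 1 / r = ‖v‖ / ρ := by rw [hr_def]; field_simp
  rw [div_eq_inv_mul]
  calc (1 - ‖φ z‖ ^ 2)⁻¹ * ‖fderiv ℂ φ z v‖
      = ‖deriv ψ 0‖ := by rw [habs]
    _ ≤ 1 / r := hSch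
    _ = ‖v‖ / ρ := h1r

lemma EH_bddAbove {D : Set F} {z : F} (v : F) {ρ : ℝ} (hρ : 0 < ρ) (hball : ball z ρ ⊆ D) :
    BddAbove (EHcand D z v) := by
  refine ⟨‖v‖ / ρ, ?_⟩
  rintro c ⟨φ, hd, hm, rfl⟩
  exact EH_cand_le hρ hball φ hd hm

lemma EH_le {D : Set F} {z : F} (v : F) {ρ : ℝ} (hρ : 0 < ρ) (hball : ball z ρ ⊆ D) :
    caratheodoryMetric D z v ≤ ‖v‖ / ρ := by
  rw [caratheodoryMetric_eq]
  refine Real.sSup_le ?_ (div_nonneg (norm_nonneg v) hρ.le)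
  rintro c ⟨φ, hd, hm, rfl⟩
  exact EH_cand_le hρ hball φ hd hm

lemma EH_nonneg {D : Set F} {z : F} (hz : z ∈ D) (v : F) : 0 ≤ caratheodoryMetric D z v := by
  rw [caratheodoryMetric_eq]
  apply Real.sSup_nonneg
  rintro c ⟨φ, hd, hm, rfl⟩
  have ha : ‖φ z‖ < 1 := EH_abs_lt_one hm hz
  have : (0:ℝ) < 1 - (‖φ z‖)^2 := by nlinarith [norm_nonneg (φ z)]
  positivity


lemma EH_comp {D : Set F} (hD : IsOpen D) {g : F → F} (hg : DifferentiableOn ℂ g D)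
    (hgm : MapsTo g D D) {z : F} (hz : z ∈ D) (v : F)
    (hBdd : BddAbove (EHcand D z v)) :
    caratheodoryMetric D (g z) (fderiv ℂ g z v) ≤ caratheodoryMetric D z v := by
  rw [caratheodoryMetric_eq, caratheodoryMetric_eq]
  refine Real.sSup_le ?_ ((caratheodoryMetric_eq D z v) ▸ EH_nonneg hz v)
  rintro c ⟨ψ, hψd, hψm, rfl⟩
  have hgat : DifferentiableAt ℂ g z := hg.differentiableAt (hD.mem_nhds hz)
  have hψat : DifferentiableAt ℂ ψ (g z) := hψd.differentiableAt (hD.mem_nhds (hgm hz))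
  have hchain : fderiv ℂ (ψ ∘ g) z = (fderiv ℂ ψ (g z)).comp (fderiv ℂ g z) :=
    fderiv_comp z hψat hgat
  have hmem : ‖fderiv ℂ ψ (g z) (fderiv ℂ g z v)‖ / (1 - (‖ψ (g z)‖)^2)
      ∈ EHcand D z v := by
    refine ⟨ψ ∘ g, hψd.comp hg hgm, hψm.comp hgm, ?_⟩
    rw [hchain]
    rfl
  exact le_csSup hBdd hmem

lemma EH_smul_le {D : Set F} {z : F} (v : F) {t : ℝ} (ht : 0 < t)
    (hBdd : BddAbove (EHcand D z (t • v))) :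
    t * caratheodoryMetric D z v ≤ caratheodoryMetric D z (t • v) := by
  rw [caratheodoryMetric_eq, caratheodoryMetric_eq]
  have hA0 : 0 ≤ sSup (EHcand D z (t • v)) := le_csSup hBdd (EHcand_zero_mem D z (t • v))
  have h : sSup (EHcand D z v) ≤ sSup (EHcand D z (t • v)) / t := by
    refine Real.sSup_le ?_ (div_nonneg hA0 ht.le)
    rintro c ⟨φ, hd, hm, rfl⟩
    rw [le_div_iff₀ ht, mul_comm]
    have hmem : t * (‖fderiv ℂ φ z v‖ / (1 - (‖φ z‖)^2))
        ∈ EHcand D z (t • v) := by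
      refine ⟨φ, hd, hm, ?_⟩
      rw [ContinuousLinearMap.map_smul_of_tower]
      rw [show ((t • (fderiv ℂ φ z v) : ℂ)) = (t:ℂ) * (fderiv ℂ φ z v) by
        simp [Complex.real_smul]]
      rw [norm_mul]
      rw [show ‖(t:ℂ)‖ = t by rw [Complex.norm_real, Real.norm_eq_abs]; exact abs_of_pos ht]
      ring
    exact le_csSup hBdd hmem
  calc t * sSup (EHcand D z v) ≤ t * (sSup (EHcand D z (t • v)) / t) := by
        exact mul_le_mul_of_nonneg_left h ht.le
    _ = sSup (EHcand D z (t • v)) := by field_simp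

lemma EH_lower {D : Set F} {z : F} (hz : z ∈ D) (v : F) {M : ℝ} (hM : 0 < M)
    (hDd : ∀ u ∈ D, ‖u - z‖ ≤ M) (hBdd : BddAbove (EHcand D z v)) :
    ‖v‖ / (2*M) ≤ caratheodoryMetric D z v := by
  rcases eq_or_ne v 0 with rfl | hv
  · simpa using EH_nonneg hz (0 : F)
  obtain ⟨g, hg1, hgv⟩ := exists_dual_vector ℂ v (norm_ne_zero_iff.2 hv)
  set c : ℂ := ((2*M : ℝ) : ℂ)⁻¹ with hc
  set φ : F → ℂ := fun u => c * g (u - z) with hφ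
  have hφd : DifferentiableOn ℂ φ Set.univ := by
    apply DifferentiableOn.const_mul
    exact (g.differentiable.comp (differentiable_id.sub_const z)).differentiableOn
  have hφm : MapsTo φ D (ball 0 1) := by
    intro u hu
    rw [mem_ball_zero_iff]
    have h1 : ‖g (u - z)‖ ≤ ‖u - z‖ := by
      calc ‖g (u - z)‖ ≤ ‖g‖ * ‖u - z‖ := g.le_opNorm _
      _ = ‖u - z‖ := by rw [hg1, one_mul]
    have h2 : ‖c‖ = (2*M)⁻¹ := by
      rw [hc, norm_inv, Complex.norm_real, Real.norm_eq_abs, abs_of_pos (by linarith)]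
    calc ‖φ u‖ = ‖c‖ * ‖g (u - z)‖ := by rw [hφ]; exact norm_mul c _
    _ ≤ (2*M)⁻¹ * M := by rw [h2]; exact mul_le_mul_of_nonneg_left ((h1.trans (hDd u hu))) (by positivity)
    _ < 1 := by rw [inv_mul_lt_iff₀ (by linarith)]; linarith
  have hder : HasFDerivAt φ (c • (g : F →L[ℂ] ℂ)) z := by
    have h1 : HasFDerivAt (fun u : F => u - z) (ContinuousLinearMap.id ℂ F) z :=
      (hasFDerivAt_id z).sub_const z
    have h2 : HasFDerivAt (fun u : F => g (u - z)) ((g : F →L[ℂ] ℂ).comp (ContinuousLinearMap.id ℂ F)) z :=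
      (g.hasFDerivAt).comp z h1
    have h3 := h2.const_mul c
    simpa [hφ, ContinuousLinearMap.comp_id] using h3
  have hfd : fderiv ℂ φ z = c • (g : F →L[ℂ] ℂ) := hder.fderiv
  have hφz : φ z = 0 := by simp [hφ]
  have hval : ‖fderiv ℂ φ z v‖ / (1 - (‖φ z‖)^2) = ‖v‖ / (2*M) := by
    have hgv' : g v = ((‖v‖:ℝ):ℂ) := hgv
    rw [hfd, hφz]
    simp only [ContinuousLinearMap.smul_apply, map_zero]
    rw [hgv', smul_eq_mul, norm_mul, hc, norm_inv, Complex.norm_real, Complex.norm_real, Real.norm_eq_abs, Real.norm_eq_abs,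
      _root_.abs_of_pos (show (0:ℝ) < 2*M by linarith), _root_.abs_of_nonneg (norm_nonneg v)]
    norm_num
    ring
  have hmem : ‖v‖ / (2*M) ∈ EHcand D z v := by
    refine ⟨φ, hφd.mono (subset_univ D), hφm, hval.symm⟩
  exact le_csSup hBdd hmem


variable {G : Type*} [NormedAddCommGroup G] [NormedSpace ℂ G]

lemma EH_slice_hasDerivAt {f : F → G} {z : F} (hf : DifferentiableAt ℂ f z) (v : F) :
    HasDerivAt (fun ζ : ℂ => f (z + ζ • v)) (fderiv ℂ f z v) 0 := by
  have hinner : HasDerivAt (fun ζ : ℂ => z + ζ • v) v 0 := by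
    simpa using ((hasDerivAt_id (0:ℂ)).smul_const v).const_add z
  have hat : HasFDerivAt f (fderiv ℂ f z) (z + (0:ℂ) • v) := by
    rw [show z + (0:ℂ) • v = z by simp]
    exact hf.hasFDerivAt
  exact hat.comp_hasDerivAt 0 hinner

lemma EH_fderiv_continuousOn [ProperSpace F] {D : Set F} (hD : IsOpen D) {f : F → G}
    (hf : DifferentiableOn ℂ f D) : ContinuousOn (fderiv ℂ f) D := by
  intro z₀ hz₀
  apply ContinuousAt.continuousWithinAt
  obtain ⟨ε₀, hε₀, hball⟩ := Metric.isOpen_iff.1 hD z₀ hz₀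
  set ρ := ε₀ / 4 with hρdef
  have hρ : 0 < ρ := by positivity
  have hsub : closedBall z₀ (3 * ρ) ⊆ D := by
    refine Subset.trans ?_ hball
    intro x hx
    rw [mem_closedBall] at hx
    rw [mem_ball]
    calc dist x z₀ ≤ 3 * ρ := hx
    _ < ε₀ := by rw [hρdef]; linarith
  have hcompact : IsCompact (closedBall z₀ (3 * ρ)) := isCompact_closedBall z₀ _
  have hucont : UniformContinuousOn f (closedBall z₀ (3 * ρ)) :=
    hcompact.uniformContinuousOn_of_continuous ((hf.mono hsub).continuousOn)
  rw [Metric.continuousAt_iff]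
  intro ε hε
  have hε' : 0 < ε * ρ / 6 := by positivity
  obtain ⟨δ, hδ, hδ'⟩ := (Metric.uniformContinuousOn_iff).1 hucont (ε * ρ / 6) hε'
  refine ⟨min δ ρ, lt_min hδ hρ, ?_⟩
  intro z hz
  rw [dist_eq_norm] at hz ⊢
  have hzδ : ‖z - z₀‖ < δ := lt_of_lt_of_le hz (min_le_left _ _)
  have hzρ : ‖z - z₀‖ < ρ := lt_of_lt_of_le hz (min_le_right _ _)
  have hzD : z ∈ D := hball (by
    rw [mem_ball, dist_eq_norm]
    calc ‖z - z₀‖ < ρ := hzρ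
    _ < ε₀ := by rw [hρdef]; linarith)
  -- key bound on directional derivatives
  have key : ∀ v : F, ‖fderiv ℂ f z v - fderiv ℂ f z₀ v‖ ≤ ε / 2 * ‖v‖ := by
    intro v
    rcases eq_or_ne v 0 with rfl | hv
    · simp
    have hvn : (0:ℝ) < ‖v‖ := norm_pos_iff.2 hv
    set r := ρ / ‖v‖ with hrdef
    have hrpos : 0 < r := div_pos hρ hvn
    set h : ℂ → G := fun ζ => f (z + ζ • v) - f (z₀ + ζ • v) with hhdef
    have hmem : ∀ ζ : ℂ, ζ ∈ ball (0:ℂ) r →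
        (z + ζ • v ∈ closedBall z₀ (3*ρ) ∧ z₀ + ζ • v ∈ closedBall z₀ (3*ρ)) := by
      intro ζ hζ
      rw [mem_ball_zero_iff] at hζ
      have hζv : ‖ζ • v‖ ≤ ρ := by
        rw [norm_smul]
        calc ‖ζ‖ * ‖v‖ ≤ r * ‖v‖ := mul_le_mul_of_nonneg_right hζ.le hvn.le
        _ = ρ := by rw [hrdef]; field_simp
      constructor
      · rw [mem_closedBall, dist_eq_norm]
        have : z + ζ • v - z₀ = (z - z₀) + ζ • v := by abel
        rw [this]
        calc ‖(z - z₀) + ζ • v‖ ≤ ‖z - z₀‖ + ‖ζ • v‖ := norm_add_le _ _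
        _ ≤ ρ + ρ := add_le_add hzρ.le hζv
        _ ≤ 3 * ρ := by linarith
      · rw [mem_closedBall, dist_eq_norm]
        have : z₀ + ζ • v - z₀ = ζ • v := by abel
        rw [this]
        linarith
    have hdiffh : DifferentiableOn ℂ h (ball (0:ℂ) r) := by
      intro ζ hζ
      obtain ⟨h1, h2⟩ := hmem ζ hζ
      have d1 : DifferentiableAt ℂ (fun ζ : ℂ => f (z + ζ • v)) ζ := by
        have := (hf.differentiableAt (hD.mem_nhds (hsub h1))).comp ζ
          (((differentiableAt_id).smul_const v).const_add z)
        exact this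
      have d2 : DifferentiableAt ℂ (fun ζ : ℂ => f (z₀ + ζ • v)) ζ := by
        have := (hf.differentiableAt (hD.mem_nhds (hsub h2))).comp ζ
          (((differentiableAt_id).smul_const v).const_add z₀)
        exact this
      exact (d1.sub d2).differentiableWithinAt
    have hbound : ∀ ζ ∈ ball (0:ℂ) r, ‖h ζ‖ ≤ ε * ρ / 6 := by
      intro ζ hζ
      obtain ⟨h1, h2⟩ := hmem ζ hζ
      have := hδ' (z + ζ • v) h1 (z₀ + ζ • v) h2 (by
        rw [dist_eq_norm]
        have : z + ζ • v - (z₀ + ζ • v) = z - z₀ := by abel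
        rw [this]; exact hzδ)
      rw [dist_eq_norm] at this
      exact this.le
    have hmapsTo : MapsTo h (ball (0:ℂ) r) (ball (h 0) (3 * (ε * ρ / 6))) := by
      intro ζ hζ
      rw [mem_ball, dist_eq_norm]
      calc ‖h ζ - h 0‖ ≤ ‖h ζ‖ + ‖h 0‖ := norm_sub_le _ _
      _ ≤ ε * ρ / 6 + ε * ρ / 6 := add_le_add (hbound ζ hζ) (hbound 0 (mem_ball_self hrpos))
      _ < 3 * (ε * ρ / 6) := by linarith
    have hSch : ‖deriv h 0‖ ≤ 3 * (ε * ρ / 6) / r :=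
      Complex.norm_deriv_le_div_of_mapsTo_ball hdiffh (hmapsTo.mono_right ball_subset_closedBall) hrpos
    have hd1 : HasDerivAt (fun ζ : ℂ => f (z + ζ • v)) (fderiv ℂ f z v) 0 :=
      EH_slice_hasDerivAt (hf.differentiableAt (hD.mem_nhds hzD)) v
    have hd2 : HasDerivAt (fun ζ : ℂ => f (z₀ + ζ • v)) (fderiv ℂ f z₀ v) 0 :=
      EH_slice_hasDerivAt (hf.differentiableAt (hD.mem_nhds hz₀)) v
    have hdh : HasDerivAt h (fderiv ℂ f z v - fderiv ℂ f z₀ v) 0 := hd1.sub hd2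
    rw [hdh.deriv] at hSch
    calc ‖fderiv ℂ f z v - fderiv ℂ f z₀ v‖ ≤ 3 * (ε * ρ / 6) / r := hSch
    _ = ε / 2 * ‖v‖ := by rw [hrdef]; field_simp; ring
  have hopnorm : ‖fderiv ℂ f z - fderiv ℂ f z₀‖ ≤ ε / 2 := by
    apply ContinuousLinearMap.opNorm_le_bound _ (by positivity)
    intro v
    have := key v
    simpa using this
  calc ‖fderiv ℂ f z - fderiv ℂ f z₀‖ ≤ ε / 2 := hopnorm
  _ < ε := by linarith

lemma EH_contDiffOn [ProperSpace F] {D : Set F} (hD : IsOpen D) {f : F → G}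
    (hf : DifferentiableOn ℂ f D) : ContDiffOn ℂ 1 f D := by
  rw [show (1 : WithTop ℕ∞) = 0 + 1 by norm_num]
  rw [contDiffOn_succ_iff_fderiv_of_isOpen hD]
  refine ⟨hf, ?_, ?_⟩
  · intro h; exact absurd h (by norm_num)
  · exact contDiffOn_zero.2 (EH_fderiv_continuousOn hD hf)


lemma EH_tube {D : Set F} (hD : IsOpen D) {K : Set F} (hK : IsCompact K) (hKD : K ⊆ D) :
    ∃ ρ > 0, ∀ x ∈ K, ball x ρ ⊆ D := by
  obtain ⟨δ, hδ, hsub⟩ := hK.exists_thickening_subset_open hD hKD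
  refine ⟨δ, hδ, fun x hx y hy => hsub ?_⟩
  exact Metric.mem_thickening_iff.2 ⟨x, hx, mem_ball.1 hy⟩

lemma EH_ae_Ioo_of_Icc : ∀ᵐ t ∂(volume.restrict (Icc (0:ℝ) 1)), t ∈ Ioo (0:ℝ) 1 := by
  have h0 : (volume : Measure ℝ) ({0, 1} : Set ℝ) = 0 := by
    refine le_antisymm ?_ zero_le
    calc volume ({0, 1} : Set ℝ) ≤ volume ({0} : Set ℝ) + volume ({1} : Set ℝ) :=
      measure_union_le _ _
    _ = 0 := by simp
  have h1 : ∀ᵐ t ∂(volume.restrict (Icc (0:ℝ) 1)), t ∉ ({0, 1} : Set ℝ) :=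
    ae_restrict_of_ae (measure_eq_zero_iff_ae_notMem.1 h0)
  filter_upwards [h1, ae_restrict_mem measurableSet_Icc] with t ht htm
  simp only [mem_insert_iff, mem_singleton_iff, not_or] at ht
  exact ⟨lt_of_le_of_ne htm.1 (Ne.symm ht.1), lt_of_le_of_ne htm.2 ht.2⟩

lemma EH_ae_Ioo_of_Ioc : ∀ᵐ t ∂(volume.restrict (Ioc (0:ℝ) 1)), t ∈ Ioo (0:ℝ) 1 := by
  have h0 : (volume : Measure ℝ) ({1} : Set ℝ) = 0 := by simp
  have h1 : ∀ᵐ t ∂(volume.restrict (Ioc (0:ℝ) 1)), t ∉ ({1} : Set ℝ) :=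
    ae_restrict_of_ae (measure_eq_zero_iff_ae_notMem.1 h0)
  filter_upwards [h1, ae_restrict_mem measurableSet_Ioc] with t ht htm
  simp only [mem_singleton_iff] at ht
  exact ⟨htm.1, lt_of_le_of_ne htm.2 ht⟩

lemma EH_deriv_eq {γ : ℝ → F} (hγ : ContDiffOn ℝ 1 γ (Icc 0 1)) :
    ∀ t ∈ Ioo (0:ℝ) 1, DifferentiableAt ℝ γ t ∧ deriv γ t = derivWithin γ (Icc 0 1) t := by
  intro t ht
  have hnh : Icc (0:ℝ) 1 ∈ 𝓝 t := Icc_mem_nhds ht.1 ht.2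
  have hd : DifferentiableWithinAt ℝ γ (Icc 0 1) t :=
    (hγ.differentiableOn one_ne_zero) t (Ioo_subset_Icc_self ht)
  exact ⟨hd.differentiableAt hnh, (derivWithin_of_mem_nhds hnh).symm⟩

lemma EH_curve_integrable [ProperSpace F] {D : Set F} (hD : IsOpen D) {γ : ℝ → F}
    (hγ : ContDiffOn ℝ 1 γ (Icc 0 1)) (hγm : MapsTo γ (Icc 0 1) D) :
    IntervalIntegrable (fun t => caratheodoryMetric D (γ t) (deriv γ t)) volume 0 1 := by
  obtain ⟨ρ, hρ, htube⟩ := EH_tube hD (isCompact_Icc.image_of_continuousOn hγ.continuousOn)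
    (image_subset_iff.2 hγm)
  have htube' : ∀ t ∈ Icc (0:ℝ) 1, ball (γ t) ρ ⊆ D := fun t ht =>
    htube _ (mem_image_of_mem γ ht)
  set w := derivWithin γ (Icc (0:ℝ) 1) with hwdef
  have hwc : ContinuousOn w (Icc 0 1) := hγ.continuousOn_derivWithin (uniqueDiffOn_Icc one_pos) le_rfl
  obtain ⟨C, hC⟩ := isCompact_Icc.exists_bound_of_continuousOn hwc
  set A : ℝ → ℝ := fun t => caratheodoryMetric D (γ t) (w t) with hAdef
  set B : ℝ → ℝ := (Ioo (0:ℝ) 1).indicator A with hBdef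
  have hA0 : ∀ t ∈ Ioo (0:ℝ) 1, 0 ≤ A t := fun t ht =>
    EH_nonneg (hγm (Ioo_subset_Icc_self ht)) _
  have hB0 : ∀ t, 0 ≤ B t := by
    intro t
    by_cases h : t ∈ Ioo (0:ℝ) 1
    · rw [hBdef, indicator_of_mem h]; exact hA0 t h
    · rw [hBdef, indicator_of_notMem h]
  have hlsc : LowerSemicontinuous B := by
    intro t₀ y hy
    rcases lt_or_ge y 0 with hy0 | hy0
    · exact Eventually.of_forall (fun t => lt_of_lt_of_le hy0 (hB0 t))
    · have ht₀ : t₀ ∈ Ioo (0:ℝ) 1 := by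
        by_contra h
        rw [hBdef, indicator_of_notMem h] at hy
        exact absurd hy (not_lt.2 hy0)
      rw [hBdef, indicator_of_mem ht₀] at hy
      have hy' : y < sSup (EHcand D (γ t₀) (w t₀)) := hy
      obtain ⟨c, hcmem, hyc⟩ := exists_lt_of_lt_csSup ⟨0, EHcand_zero_mem _ _ _⟩ hy'
      obtain ⟨φ, hφd, hφm, rfl⟩ := hcmem
      have hφfc : ContinuousOn (fderiv ℂ φ) D := EH_fderiv_continuousOn hD hφd
      have hγc : ContinuousOn γ (Ioo (0:ℝ) 1) := hγ.continuousOn.mono Ioo_subset_Icc_self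
      have hγmem : ∀ t ∈ Ioo (0:ℝ) 1, γ t ∈ D := fun t ht => hγm (Ioo_subset_Icc_self ht)
      have hwc' : ContinuousOn w (Ioo (0:ℝ) 1) := hwc.mono Ioo_subset_Icc_self
      set val : ℝ → ℝ := fun t =>
        ‖fderiv ℂ φ (γ t) (w t)‖ / (1 - (‖φ (γ t)‖)^2) with hvaldef
      have habsc : ContinuousOn (fun t => ‖φ (γ t)‖) (Ioo (0:ℝ) 1) :=
        continuous_norm.comp_continuousOn ((hφd.continuousOn).comp hγc hγmem)
      have hvalc : ContinuousOn val (Ioo (0:ℝ) 1) := by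
        apply ContinuousOn.div
        · exact continuous_norm.comp_continuousOn
            ((hφfc.comp hγc hγmem).clm_apply hwc')
        · exact continuousOn_const.sub (habsc.pow 2)
        · intro t ht
          have := EH_abs_lt_one hφm (hγmem t ht)
          have h2 : (0:ℝ) < 1 - (‖φ (γ t)‖)^2 := by
            nlinarith [norm_nonneg (φ (γ t))]
          exact ne_of_gt h2
      have hval_le : ∀ t ∈ Ioo (0:ℝ) 1, val t ≤ A t := fun t ht =>
        le_csSup (EH_bddAbove _ hρ (htube' t (Ioo_subset_Icc_self ht))) ⟨φ, hφd, hφm, rfl⟩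
      have hvat : ContinuousAt val t₀ := hvalc.continuousAt (isOpen_Ioo.mem_nhds ht₀)
      have hev1 : ∀ᶠ t in nhds t₀, y < val t := hvat.eventually (eventually_gt_nhds hyc)
      have hev2 : ∀ᶠ t in nhds t₀, t ∈ Ioo (0:ℝ) 1 :=
        eventually_of_mem (isOpen_Ioo.mem_nhds ht₀) (fun t ht => ht)
      filter_upwards [hev1, hev2] with t h1 h2
      rw [hBdef, indicator_of_mem h2]
      exact lt_of_lt_of_le h1 (hval_le t h2)
  have hBmeas : Measurable B := hlsc.measurable
  set C' : ℝ := max (C / ρ) 0 with hC'def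
  have hBb : ∀ t, ‖B t‖ ≤ C' := by
    intro t
    rw [Real.norm_eq_abs, _root_.abs_of_nonneg (hB0 t)]
    by_cases h : t ∈ Ioo (0:ℝ) 1
    · rw [hBdef, indicator_of_mem h]
      calc A t ≤ ‖w t‖ / ρ := EH_le _ hρ (htube' t (Ioo_subset_Icc_self h))
      _ ≤ C / ρ := by gcongr; exact hC t (Ioo_subset_Icc_self h)
      _ ≤ C' := le_max_left _ _
    · rw [hBdef, indicator_of_notMem h]; exact le_max_right _ _
  have hBint : IntegrableOn B (Ioc 0 1) volume := by
    have hconst : IntegrableOn (fun _ => C') (Ioc (0:ℝ) 1) volume :=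
      integrableOn_const measure_Ioc_lt_top.ne
    exact Integrable.mono' hconst hBmeas.aestronglyMeasurable.restrict
      (Eventually.of_forall hBb)
  have hae : (fun t => caratheodoryMetric D (γ t) (deriv γ t)) =ᵐ[volume.restrict (Ioc 0 1)] B := by
    filter_upwards [EH_ae_Ioo_of_Ioc] with t ht
    rw [(EH_deriv_eq hγ t ht).2, hBdef, indicator_of_mem ht]
  rw [intervalIntegrable_iff_integrableOn_Ioc_of_le (by norm_num : (0:ℝ) ≤ 1)]
  exact hBint.congr hae.symm


def EHpaths (D : Set F) (z w : F) : Set ℝ :=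
  {L : ℝ | ∃ γ : ℝ → F, ContDiffOn ℝ 1 γ (Icc 0 1) ∧
    MapsTo γ (Icc 0 1) D ∧ γ 0 = z ∧ γ 1 = w ∧
    L = ∫ t in (0:ℝ)..1, caratheodoryMetric D (γ t) (deriv γ t)}

lemma caratheodoryIntDist_eq (D : Set F) (z w : F) :
    caratheodoryIntDist D z w = sInf (EHpaths D z w) := rfl

/-- extension of a C¹ path to a nearby point -/
lemma EH_path_extend {D : Set F} {z w w' : F} {r : ℝ} (hbr : ball w' r ⊆ D)
    (hww' : ‖w' - w‖ < r)
    (h : ∃ γ : ℝ → F, ContDiffOn ℝ 1 γ (Icc 0 1) ∧ MapsTo γ (Icc 0 1) D ∧ γ 0 = z ∧ γ 1 = w) :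
    ∃ γ : ℝ → F, ContDiffOn ℝ 1 γ (Icc 0 1) ∧ MapsTo γ (Icc 0 1) D ∧ γ 0 = z ∧ γ 1 = w' := by
  obtain ⟨γ, hγ, hγm, h0, h1⟩ := h
  set s : ℝ → ℝ := fun t => Real.smoothTransition (2*t - 1) with hsdef
  set rr : ℝ → ℝ := fun t => Real.smoothTransition (2*t) with hrrdef
  refine ⟨fun t => γ (rr t) + s t • (w' - w), ?_, ?_, ?_, ?_⟩
  · apply ContDiffOn.add
    · apply hγ.comp
      · apply ContDiff.contDiffOn
        exact Real.smoothTransition.contDiff.comp (contDiff_const.mul contDiff_id)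
      · intro t _
        exact ⟨Real.smoothTransition.nonneg _, Real.smoothTransition.le_one _⟩
    · apply ContDiff.contDiffOn
      exact (Real.smoothTransition.contDiff.comp
        ((contDiff_const.mul contDiff_id).sub contDiff_const)).smul contDiff_const
  · intro t ht
    rcases le_or_gt t (1/2 : ℝ) with hhalf | hhalf
    · have hs0 : s t = 0 := Real.smoothTransition.zero_of_nonpos (by linarith)
      simp only [hs0, zero_smul, add_zero]
      exact hγm ⟨Real.smoothTransition.nonneg _, Real.smoothTransition.le_one _⟩
    · have hr1 : rr t = 1 := Real.smoothTransition.one_of_one_le (by linarith)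
      show γ (rr t) + s t • (w' - w) ∈ D
      rw [hr1, h1]
      apply hbr
      rw [mem_ball, dist_eq_norm]
      have he : w + s t • (w' - w) - w' = (s t - 1) • (w' - w) := by
        rw [sub_smul, one_smul]; abel
      rw [he, norm_smul]
      have hs01 : 0 ≤ s t ∧ s t ≤ 1 :=
        ⟨Real.smoothTransition.nonneg _, Real.smoothTransition.le_one _⟩
      have : ‖s t - 1‖ ≤ 1 := by
        rw [Real.norm_eq_abs, abs_le]; constructor <;> linarith [hs01.1, hs01.2]
      calc ‖s t - 1‖ * ‖w' - w‖ ≤ 1 * ‖w' - w‖ :=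
            mul_le_mul_of_nonneg_right this (norm_nonneg _)
      _ = ‖w' - w‖ := one_mul _
      _ < r := hww'
  · have : rr 0 = 0 := Real.smoothTransition.zero_of_nonpos (by norm_num)
    have hs : s 0 = 0 := Real.smoothTransition.zero_of_nonpos (by norm_num)
    simp [this, hs, h0]
  · have : rr 1 = 1 := Real.smoothTransition.one_of_one_le (by norm_num)
    have hs : s 1 = 1 := Real.smoothTransition.one_of_one_le (by norm_num)
    simp [this, hs, h1]

lemma EH_joined {D : Set F} (hD : IsOpen D) (hconn : IsPreconnected D) {z : F} (hz : z ∈ D) :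
    ∀ w ∈ D, ∃ γ : ℝ → F, ContDiffOn ℝ 1 γ (Icc 0 1) ∧ MapsTo γ (Icc 0 1) D ∧
      γ 0 = z ∧ γ 1 = w := by
  set J : Set F := {w | ∃ γ : ℝ → F, ContDiffOn ℝ 1 γ (Icc 0 1) ∧ MapsTo γ (Icc 0 1) D ∧
      γ 0 = z ∧ γ 1 = w} with hJdef
  have hzJ : z ∈ J := by
    refine ⟨fun _ => z, contDiffOn_const, fun t _ => hz, rfl, rfl⟩
  -- u := points of D having a C¹ path; open
  have hopen1 : IsOpen (J ∩ D) := by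
    rw [Metric.isOpen_iff]
    rintro w ⟨hwJ, hwD⟩
    obtain ⟨rb, hrb, hball⟩ := Metric.isOpen_iff.1 hD w hwD
    refine ⟨rb/2, by linarith, ?_⟩
    intro w' hw'
    rw [mem_ball, dist_eq_norm] at hw'
    have hball' : ball w' (rb/2) ⊆ D := by
      intro x hx
      apply hball
      rw [mem_ball] at hx ⊢
      calc dist x w ≤ dist x w' + dist w' w := dist_triangle _ _ _
      _ < rb/2 + rb/2 := add_lt_add hx (by rwa [dist_eq_norm])
      _ = rb := by ring
    refine ⟨EH_path_extend hball' hw' hwJ, hball' (mem_ball_self (by linarith))⟩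
  have hopen2 : IsOpen (D \ J) := by
    rw [Metric.isOpen_iff]
    rintro w ⟨hwD, hwJ⟩
    obtain ⟨rb, hrb, hball⟩ := Metric.isOpen_iff.1 hD w hwD
    refine ⟨rb/2, by linarith, ?_⟩
    intro w' hw'
    rw [mem_ball, dist_eq_norm] at hw'
    have hw'D : w' ∈ D := by
      apply hball
      rw [mem_ball, dist_eq_norm]
      calc ‖w' - w‖ < rb/2 := hw'
      _ < rb := by linarith
    refine ⟨hw'D, ?_⟩
    intro hw'J
    apply hwJ
    apply EH_path_extend hball (by rw [norm_sub_rev]; linarith) hw'J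
  -- preconnectedness
  intro w hw
  by_contra hwJ
  have hcover : D ⊆ (J ∩ D) ∪ (D \ J) := by
    intro x hx
    by_cases h : x ∈ J
    · exact Or.inl ⟨h, hx⟩
    · exact Or.inr ⟨hx, h⟩
  have h1 : (D ∩ (J ∩ D)).Nonempty := ⟨z, hz, hzJ, hz⟩
  have h2 : (D ∩ (D \ J)).Nonempty := ⟨w, hw, hw, hwJ⟩
  obtain ⟨x, _, ⟨hxJ, _⟩, _, hxJ'⟩ := hconn _ _ hopen1 hopen2 hcover h1 h2
  exact hxJ' hxJ


end EH

section MainLemmas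

variable {F : Type*} [NormedAddCommGroup F] [NormedSpace ℂ F] [ProperSpace F]

lemma EHpaths_nonneg {D : Set F} {z w : F} : ∀ L ∈ EHpaths D z w, 0 ≤ L := by
  rintro L ⟨γ, hγ, hγm, h0, h1, rfl⟩
  apply intervalIntegral.integral_nonneg (by norm_num)
  intro u hu
  exact EH_nonneg (hγm hu) _

lemma EH_II_congr {X : Type*} [NormedAddCommGroup X] {u v : ℝ → X}
    (h : ∀ t ∈ Ioo (0:ℝ) 1, u t = v t) (hu : IntervalIntegrable u volume 0 1) :
    IntervalIntegrable v volume 0 1 := by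
  rw [intervalIntegrable_iff_integrableOn_Ioc_of_le (by norm_num : (0:ℝ) ≤ 1)] at hu ⊢
  apply hu.congr
  filter_upwards [EH_ae_Ioo_of_Ioc] with t ht
  exact h t ht

lemma EH_contract_metric {D : Set F} (hD : IsOpen D) {f : F → F}
    (hf : DifferentiableOn ℂ f D) (hfm : MapsTo f D D)
    {M ε : ℝ} (hM : 0 < M) (hε : 0 < ε)
    (hdiam : ∀ x ∈ D, ∀ y ∈ D, dist x y ≤ M)
    (hballs : ∀ u ∈ D, ball (f u) ε ⊆ D) :
    ∀ z ∈ D, ∀ v, caratheodoryMetric D (f z) (fderiv ℂ f z v) ≤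
      (1/(1 + ε/(2*M))) * caratheodoryMetric D z v := by
  intro z hz v
  set c : ℝ := ε/(2*M) with hcdef
  have hc : 0 < c := by positivity
  set g : F → F := fun u => f u + (c:ℂ) • (f u - f z) with hgdef
  have hgd : DifferentiableOn ℂ g D :=
    hf.add ((hf.sub (differentiableOn_const _)).const_smul _)
  have hgm : MapsTo g D D := by
    intro u hu
    apply hballs u hu
    rw [mem_ball, dist_eq_norm]
    show ‖f u + (c:ℂ) • (f u - f z) - f u‖ < ε
    rw [add_sub_cancel_left, norm_smul, Complex.norm_real, Real.norm_eq_abs, abs_of_pos hc]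
    have hb : ‖f u - f z‖ ≤ M := by
      rw [← dist_eq_norm]
      exact hdiam _ (hfm hu) _ (hfm hz)
    calc c * ‖f u - f z‖ ≤ c * M := mul_le_mul_of_nonneg_left hb hc.le
    _ = ε/2 := by rw [hcdef]; field_simp
    _ < ε := by linarith
  have hfat : HasFDerivAt f (fderiv ℂ f z) z :=
    (hf.differentiableAt (hD.mem_nhds hz)).hasFDerivAt
  have hgat : HasFDerivAt g (fderiv ℂ f z + (c:ℂ) • fderiv ℂ f z) z :=
    hfat.add ((hfat.sub_const (f z)).const_smul (c:ℂ))
  have hgz : g z = f z := by rw [hgdef]; simp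
  have hvec : (1+c) • (fderiv ℂ f z v) = fderiv ℂ g z v := by
    rw [hgat.fderiv]
    show ((1+c : ℝ) : ℂ) • (fderiv ℂ f z v) = (fderiv ℂ f z + (c:ℂ) • fderiv ℂ f z) v
    rw [ContinuousLinearMap.add_apply, ContinuousLinearMap.smul_apply,
      Complex.ofReal_add, Complex.ofReal_one, add_smul, one_smul]
  obtain ⟨ρz, hρz, hbz⟩ := Metric.isOpen_iff.1 hD z hz
  have h1 : caratheodoryMetric D (g z) (fderiv ℂ g z v) ≤ caratheodoryMetric D z v :=
    EH_comp hD hgd hgm hz v (EH_bddAbove v hρz hbz)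
  have h2 : (1+c) * caratheodoryMetric D (f z) (fderiv ℂ f z v) ≤
      caratheodoryMetric D (f z) ((1+c) • (fderiv ℂ f z v)) :=
    EH_smul_le _ (by linarith) (EH_bddAbove _ hε (hballs z hz))
  have h3 : caratheodoryMetric D (f z) ((1+c) • (fderiv ℂ f z v)) =
      caratheodoryMetric D (g z) (fderiv ℂ g z v) := by rw [hvec, hgz]
  have h1c : (0:ℝ) < 1 + c := by linarith
  calc caratheodoryMetric D (f z) (fderiv ℂ f z v)
      = ((1+c) * caratheodoryMetric D (f z) (fderiv ℂ f z v))/(1+c) := by field_simp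
    _ ≤ caratheodoryMetric D z v / (1+c) := by
        apply div_le_div_of_nonneg_right ?_ h1c.le
        calc (1+c) * caratheodoryMetric D (f z) (fderiv ℂ f z v)
            ≤ caratheodoryMetric D (f z) ((1+c) • (fderiv ℂ f z v)) := h2
          _ = caratheodoryMetric D (g z) (fderiv ℂ g z v) := h3
          _ ≤ caratheodoryMetric D z v := h1
    _ = (1/(1 + ε/(2*M))) * caratheodoryMetric D z v := by rw [← hcdef]; ring

lemma EH_dist_lipschitz {D : Set F} (hD : IsOpen D) (hconn : IsPreconnected D) {f : F → F}
    (hf : DifferentiableOn ℂ f D) (hfm : MapsTo f D D)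
    {M ε : ℝ} (hM : 0 < M) (hε : 0 < ε)
    (hdiam : ∀ x ∈ D, ∀ y ∈ D, dist x y ≤ M)
    (hballs : ∀ u ∈ D, ball (f u) ε ⊆ D) :
    ∀ z ∈ D, ∀ w ∈ D, caratheodoryIntDist D (f z) (f w) ≤
      (1/(1 + ε/(2*M))) * caratheodoryIntDist D z w := by
  set k : ℝ := 1/(1 + ε/(2*M)) with hkdef
  have hc : 0 < ε/(2*M) := by positivity
  have hk0 : 0 < k := by rw [hkdef]; positivity
  intro z hz w hw
  have hSne : (EHpaths D z w).Nonempty := by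
    obtain ⟨γ, hγ, hγm, h0, h1⟩ := EH_joined hD hconn hz w hw
    exact ⟨_, γ, hγ, hγm, h0, h1, rfl⟩
  have key : ∀ L ∈ EHpaths D z w, caratheodoryIntDist D (f z) (f w) ≤ k * L := by
    rintro L ⟨γ, hγ, hγm, h0, h1, rfl⟩
    have hfC : ContDiffOn ℝ 1 f D := (EH_contDiffOn hD hf).restrict_scalars ℝ
    have hη : ContDiffOn ℝ 1 (f ∘ γ) (Icc 0 1) := hfC.comp hγ hγm
    have hηm : MapsTo (f ∘ γ) (Icc 0 1) D := hfm.comp hγm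
    have hmem : (∫ t in (0:ℝ)..1, caratheodoryMetric D ((f ∘ γ) t) (deriv (f ∘ γ) t))
        ∈ EHpaths D (f z) (f w) := by
      refine ⟨f ∘ γ, hη, hηm, by simp [Function.comp, h0], by simp [Function.comp, h1], rfl⟩
    have hstep1 : caratheodoryIntDist D (f z) (f w) ≤
        ∫ t in (0:ℝ)..1, caratheodoryMetric D ((f ∘ γ) t) (deriv (f ∘ γ) t) := by
      rw [caratheodoryIntDist_eq]
      exact csInf_le ⟨0, fun L hL => EHpaths_nonneg L hL⟩ hmem
    have hIIη := EH_curve_integrable hD hη hηm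
    have hIIγ := (EH_curve_integrable hD hγ hγm).const_mul k
    have hae : (fun t => caratheodoryMetric D ((f ∘ γ) t) (deriv (f ∘ γ) t))
        ≤ᵐ[volume.restrict (Icc (0:ℝ) 1)]
        (fun t => k * caratheodoryMetric D (γ t) (deriv γ t)) := by
      filter_upwards [EH_ae_Ioo_of_Icc] with t ht
      have hγat := (EH_deriv_eq hγ t ht).1
      have hγtD : γ t ∈ D := hγm (Ioo_subset_Icc_self ht)
      have hfat : HasFDerivAt f (fderiv ℂ f (γ t)) (γ t) :=
        (hf.differentiableAt (hD.mem_nhds hγtD)).hasFDerivAt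
      have hder : deriv (f ∘ γ) t = fderiv ℂ f (γ t) (deriv γ t) := by
        have := ((hfat.restrictScalars ℝ).comp_hasDerivAt t hγat.hasDerivAt).deriv
        simpa using this
      show caratheodoryMetric D ((f ∘ γ) t) (deriv (f ∘ γ) t) ≤ _
      rw [hder]
      exact EH_contract_metric hD hf hfm hM hε hdiam hballs (γ t) hγtD (deriv γ t)
    have hstep2 : (∫ t in (0:ℝ)..1, caratheodoryMetric D ((f ∘ γ) t) (deriv (f ∘ γ) t))
        ≤ ∫ t in (0:ℝ)..1, k * caratheodoryMetric D (γ t) (deriv γ t) :=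
      intervalIntegral.integral_mono_ae_restrict (by norm_num) hIIη hIIγ hae
    calc caratheodoryIntDist D (f z) (f w)
        ≤ ∫ t in (0:ℝ)..1, caratheodoryMetric D ((f ∘ γ) t) (deriv (f ∘ γ) t) := hstep1
      _ ≤ ∫ t in (0:ℝ)..1, k * caratheodoryMetric D (γ t) (deriv γ t) := hstep2
      _ = k * ∫ t in (0:ℝ)..1, caratheodoryMetric D (γ t) (deriv γ t) :=
          intervalIntegral.integral_const_mul k _
  have h4 : caratheodoryIntDist D (f z) (f w) / k ≤ caratheodoryIntDist D z w := by
    rw [caratheodoryIntDist_eq D z w]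
    apply le_csInf hSne
    intro L hL
    rw [div_le_iff₀ hk0]
    calc caratheodoryIntDist D (f z) (f w) ≤ k * L := key L hL
    _ = L * k := mul_comm _ _
  calc caratheodoryIntDist D (f z) (f w)
      = (caratheodoryIntDist D (f z) (f w) / k) * k := by field_simp
    _ ≤ caratheodoryIntDist D z w * k := mul_le_mul_of_nonneg_right h4 hk0.le
    _ = k * caratheodoryIntDist D z w := mul_comm _ _

lemma EH_dist_lower {D : Set F} (hD : IsOpen D) (hconn : IsPreconnected D)
    {M : ℝ} (hM : 0 < M) (hdiam : ∀ x ∈ D, ∀ y ∈ D, dist x y ≤ M) :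
    ∀ z ∈ D, ∀ w ∈ D, ‖w - z‖ / (2*M) ≤ caratheodoryIntDist D z w := by
  intro z hz w hw
  have hSne : (EHpaths D z w).Nonempty := by
    obtain ⟨γ, hγ, hγm, h0, h1⟩ := EH_joined hD hconn hz w hw
    exact ⟨_, γ, hγ, hγm, h0, h1, rfl⟩
  rw [caratheodoryIntDist_eq]
  apply le_csInf hSne
  rintro L ⟨γ, hγ, hγm, h0, h1, rfl⟩
  obtain ⟨ρ, hρ, htube⟩ := EH_tube hD (isCompact_Icc.image_of_continuousOn hγ.continuousOn)
    (image_subset_iff.2 hγm)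
  have htube' : ∀ t ∈ Icc (0:ℝ) 1, ball (γ t) ρ ⊆ D := fun t ht =>
    htube _ (mem_image_of_mem γ ht)
  have hwc : ContinuousOn (derivWithin γ (Icc (0:ℝ) 1)) (Icc 0 1) :=
    hγ.continuousOn_derivWithin (uniqueDiffOn_Icc one_pos) le_rfl
  have hII_deriv : IntervalIntegrable (deriv γ) volume 0 1 := by
    apply EH_II_congr (fun t ht => ((EH_deriv_eq hγ t ht).2).symm)
    apply ContinuousOn.intervalIntegrable
    rwa [uIcc_of_le (by norm_num : (0:ℝ) ≤ 1)]
  have hII_norm : IntervalIntegrable (fun t => ‖deriv γ t‖) volume 0 1 := by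
    apply EH_II_congr (fun t ht => by rw [(EH_deriv_eq hγ t ht).2])
    apply ContinuousOn.intervalIntegrable
    rw [uIcc_of_le (by norm_num : (0:ℝ) ≤ 1)]
    exact hwc.norm
  have hFTC : (∫ t in (0:ℝ)..1, deriv γ t) = γ 1 - γ 0 :=
    intervalIntegral.integral_eq_sub_of_hasDeriv_right_of_le (by norm_num) hγ.continuousOn
      (fun t ht => ((EH_deriv_eq hγ t ht).1.hasDerivAt).hasDerivWithinAt) hII_deriv
  have hnorm : ‖w - z‖ ≤ ∫ t in (0:ℝ)..1, ‖deriv γ t‖ := by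
    rw [← h1, ← h0, ← hFTC]
    exact intervalIntegral.norm_integral_le_integral_norm (by norm_num)
  have hmono : (∫ t in (0:ℝ)..1, ‖deriv γ t‖ / (2*M)) ≤
      ∫ t in (0:ℝ)..1, caratheodoryMetric D (γ t) (deriv γ t) := by
    apply intervalIntegral.integral_mono_ae_restrict (by norm_num)
      (hII_norm.div_const (2*M)) (EH_curve_integrable hD hγ hγm)
    filter_upwards [EH_ae_Ioo_of_Icc] with t ht
    have hγtD : γ t ∈ D := hγm (Ioo_subset_Icc_self ht)
    apply EH_lower hγtD _ hM
    · intro u hu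
      rw [← dist_eq_norm]
      exact hdiam _ hu _ hγtD
    · exact EH_bddAbove _ hρ (htube' t (Ioo_subset_Icc_self ht))
  calc ‖w - z‖ / (2*M) ≤ (∫ t in (0:ℝ)..1, ‖deriv γ t‖) / (2*M) := by
        apply div_le_div_of_nonneg_right hnorm (by positivity)
    _ = ∫ t in (0:ℝ)..1, ‖deriv γ t‖ / (2*M) := by
        rw [intervalIntegral.integral_div]
    _ ≤ _ := hmono

end MainLemmas

/-- Earle–Hamilton fixed point theorem. -/
theorem earle_hamilton
    {n : ℕ} (D : Set (Fin n → ℂ)) (hD : IsOpen D) (hDconn : IsConnected D)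
    (hDbdd : Bornology.IsBounded D)
    (f : (Fin n → ℂ) → (Fin n → ℂ))
    (hf : DifferentiableOn ℂ f D) (hfm : MapsTo f D D)
    (hcp : IsCompact (closure (f '' D))) (hsub : closure (f '' D) ⊆ D) :
    (∃ k : ℝ, k < 1 ∧ ∀ z ∈ D, ∀ w ∈ D,
        caratheodoryIntDist D (f z) (f w) ≤ k * caratheodoryIntDist D z w) ∧
    ∃ a ∈ D, f a = a ∧ (∀ b ∈ D, f b = b → b = a) ∧
      ∀ z₀ ∈ D, Tendsto (fun m => f^[m] z₀) atTop (nhds a) := by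
  obtain ⟨M₀, hM₀⟩ := Metric.isBounded_iff.1 hDbdd
  set M : ℝ := max M₀ 1 with hMdef
  have hM : 0 < M := lt_of_lt_of_le one_pos (le_max_right _ _)
  have hdiam : ∀ x ∈ D, ∀ y ∈ D, dist x y ≤ M := fun x hx y hy =>
    le_trans (hM₀ hx hy) (le_max_left _ _)
  obtain ⟨ε, hε, htube⟩ := EH_tube hD hcp hsub
  have hballs : ∀ u ∈ D, ball (f u) ε ⊆ D := fun u hu =>
    htube (f u) (subset_closure (mem_image_of_mem f hu))
  set k : ℝ := 1/(1 + ε/(2*M)) with hkdef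
  have hc : 0 < ε/(2*M) := by positivity
  have hk0 : 0 < k := by rw [hkdef]; positivity
  have hk1 : k < 1 := by
    rw [hkdef]
    rw [div_lt_one (by linarith)]
    linarith
  have hLip : ∀ z ∈ D, ∀ w ∈ D, caratheodoryIntDist D (f z) (f w) ≤
      k * caratheodoryIntDist D z w :=
    EH_dist_lipschitz hD hDconn.isPreconnected hf hfm hM hε hdiam hballs
  have hlow : ∀ z ∈ D, ∀ w ∈ D, ‖w - z‖ / (2*M) ≤ caratheodoryIntDist D z w :=
    EH_dist_lower hD hDconn.isPreconnected hM hdiam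
  refine ⟨⟨k, hk1, hLip⟩, ?_⟩
  have exist_fix : ∀ z₀ ∈ D, ∃ a ∈ D, f a = a ∧
      Tendsto (fun m => f^[m] z₀) atTop (nhds a) := by
    intro z₀ hz₀
    set u : ℕ → (Fin n → ℂ) := fun m => f^[m] z₀ with hudef
    have hu_succ : ∀ m, u (m+1) = f (u m) := fun m => Function.iterate_succ_apply' f m z₀
    have hu_mem : ∀ m, u m ∈ D := by
      intro m
      induction m with
      | zero => exact hz₀
      | succ j ih => rw [hu_succ]; exact hfm ih
    set C₀ : ℝ := caratheodoryIntDist D (u 0) (u 1) with hC₀def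
    have hC₀ : 0 ≤ C₀ := by
      have := hlow _ (hu_mem 0) _ (hu_mem 1)
      have h2 : (0:ℝ) ≤ ‖u 1 - u 0‖ / (2*M) := by positivity
      linarith
    have hd_le : ∀ m, caratheodoryIntDist D (u m) (u (m+1)) ≤ k^m * C₀ := by
      intro m
      induction m with
      | zero => simp [hC₀def]
      | succ j ih =>
        have h1 : caratheodoryIntDist D (u (j+1)) (u (j+2)) ≤
            k * caratheodoryIntDist D (u j) (u (j+1)) := by
          have h0 := hLip _ (hu_mem j) _ (hu_mem (j+1))
          rw [← hu_succ (j+1), ← hu_succ j] at h0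
          exact h0
        calc caratheodoryIntDist D (u (j+1)) (u (j+2)) ≤
            k * caratheodoryIntDist D (u j) (u (j+1)) := h1
          _ ≤ k * (k^j * C₀) := mul_le_mul_of_nonneg_left ih hk0.le
          _ = k^(j+1) * C₀ := by ring
    have hdist : ∀ m, dist (u m) (u (m+1)) ≤ (2*M*C₀) * k^m := by
      intro m
      have h1 : ‖u (m+1) - u m‖ / (2*M) ≤ caratheodoryIntDist D (u m) (u (m+1)) :=
        hlow _ (hu_mem m) _ (hu_mem (m+1))
      have h2 := hd_le m
      rw [dist_eq_norm, norm_sub_rev]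
      have h3 : ‖u (m+1) - u m‖ / (2*M) ≤ k^m * C₀ := le_trans h1 h2
      rw [div_le_iff₀ (by positivity)] at h3
      calc ‖u (m+1) - u m‖ ≤ k^m * C₀ * (2*M) := h3
      _ = (2*M*C₀) * k^m := by ring
    have hcauchy : CauchySeq u := cauchySeq_of_le_geometric k (2*M*C₀) hk1 hdist
    obtain ⟨a, ha⟩ := cauchySeq_tendsto_of_complete hcauchy
    have haK : a ∈ closure (f '' D) := by
      apply hcp.isClosed.mem_of_tendsto ha
      filter_upwards [eventually_ge_atTop 1] with m hm
      match m, hm with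
      | (j+1), _ => exact subset_closure ⟨u j, hu_mem j, (hu_succ j).symm⟩
    have haD : a ∈ D := hsub haK
    have hfa : f a = a := by
      have hca : ContinuousAt f a := hf.continuousOn.continuousAt (hD.mem_nhds haD)
      have h1 : Tendsto (fun m => u (m+1)) atTop (nhds a) :=
        ha.comp (tendsto_add_atTop_nat 1)
      have h2 : Tendsto (fun m => f (u m)) atTop (nhds (f a)) := hca.tendsto.comp ha
      have h3 : (fun m => f (u m)) = fun m => u (m+1) := funext fun m => (hu_succ m).symm
      exact tendsto_nhds_unique (h3 ▸ h2) h1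
    exact ⟨a, haD, hfa, ha⟩
  obtain ⟨z₀, hz₀⟩ := hDconn.nonempty
  obtain ⟨a, haD, hfa, hta⟩ := exist_fix z₀ hz₀
  have huniq : ∀ b ∈ D, f b = b → b = a := by
    intro b hbD hfb
    by_contra hne
    have h1 : caratheodoryIntDist D a b ≤ k * caratheodoryIntDist D a b := by
      calc caratheodoryIntDist D a b = caratheodoryIntDist D (f a) (f b) := by rw [hfa, hfb]
      _ ≤ k * caratheodoryIntDist D a b := hLip _ haD _ hbD
    have h2 : 0 < caratheodoryIntDist D a b := by
      have h3 := hlow _ haD _ hbD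
      have h4 : 0 < ‖b - a‖ := by
        rw [norm_pos_iff]
        intro h
        exact hne (by rwa [sub_eq_zero] at h)
      have h5 : 0 < ‖b - a‖ / (2*M) := by positivity
      linarith
    nlinarith
  refine ⟨a, haD, hfa, huniq, ?_⟩
  intro w₀ hw₀
  obtain ⟨a', ha'D, hfa', hta'⟩ := exist_fix w₀ hw₀
  rw [huniq a' ha'D hfa'] at hta'
  exact hta'
end

section
/- Let U be an open subset of ℂⁿ and ρ: U → U a holomorphic retraction (ρ∘ρ = ρ) with fixed point z₀. Then there is a local biholomorphic chart u from a neighborhood of z₀ onto a neighborhood V of 0 with u(z₀) = 0 such that u∘ρ∘u⁻¹ is the restriction to V of a linear projection. In particular, ρ(U) is a complex analytic submanifold of U near z₀. -/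
open Complex Metric Set Filter Topology

lemma slice_bound {F : Type*} [NormedAddCommGroup F] [NormedSpace ℂ F] [CompleteSpace F]
    {g : ℂ → F} {r M : ℝ} (hr : 2 ≤ r)
    (hd : DifferentiableOn ℂ g (closedBall 0 r))
    (hM : ∀ t ∈ closedBall (0:ℂ) r, ‖g t‖ ≤ M) :
    ‖g 1 - g 0 - deriv g 0‖ ≤ 2 * M / r ^ 2 := by
  have hr0 : (0:ℝ) < r := lt_of_lt_of_le two_pos hr
  have hM0 : 0 ≤ M := le_trans (norm_nonneg _) (hM 0 (mem_closedBall_self hr0.le))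
  set R : NNReal := ⟨r, hr0.le⟩ with hR
  have hRr : (R : ℝ) = r := rfl
  have hd' : DifferentiableOn ℂ g (closedBall 0 (R : ℝ)) := by rwa [hRr]
  have hp : HasFPowerSeriesOnBall g (cauchyPowerSeries g 0 R) 0 R :=
    hd'.hasFPowerSeriesOnBall (by exact_mod_cast hr0)
  set p := cauchyPowerSeries g 0 (R : ℝ) with hpdef
  -- coefficient bounds
  have hgc : Continuous fun θ : ℝ => ‖g (circleMap 0 r θ)‖ := by
    apply Continuous.norm
    apply hd.continuousOn.comp_continuous (continuous_circleMap 0 r)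
    intro θ
    exact sphere_subset_closedBall (circleMap_mem_sphere 0 hr0.le θ)
  have hint : ((2 * Real.pi)⁻¹ * ∫ θ : ℝ in (0)..2 * Real.pi, ‖g (circleMap 0 r θ)‖) ≤ M := by
    have h1 : (∫ θ : ℝ in (0)..2 * Real.pi, ‖g (circleMap 0 r θ)‖) ≤
        ∫ _ : ℝ in (0)..2 * Real.pi, M := by
      apply intervalIntegral.integral_mono_on Real.two_pi_pos.le
        (hgc.intervalIntegrable _ _) intervalIntegrable_const
      intro θ _
      exact hM _ (sphere_subset_closedBall (circleMap_mem_sphere 0 hr0.le θ))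
    have h2 : (∫ _ : ℝ in (0)..2 * Real.pi, M) = 2 * Real.pi * M := by simp [mul_comm]
    calc (2 * Real.pi)⁻¹ * ∫ θ : ℝ in (0)..2 * Real.pi, ‖g (circleMap 0 r θ)‖
        ≤ (2 * Real.pi)⁻¹ * (2 * Real.pi * M) := by
          apply mul_le_mul_of_nonneg_left _ (by positivity)
          rw [← h2]; exact h1
      _ = M := by field_simp
  have hcoef : ∀ k : ℕ, ‖p.coeff k‖ ≤ M / r ^ k := by
    intro k
    have h1 : ‖p k‖ ≤ ((2 * Real.pi)⁻¹ * ∫ θ : ℝ in (0)..2 * Real.pi,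
        ‖g (circleMap 0 r θ)‖) * |r|⁻¹ ^ k := norm_cauchyPowerSeries_le g 0 r k
    have h3 : |r| = r := abs_of_pos hr0
    calc ‖p.coeff k‖ = ‖p k‖ := (p.norm_apply_eq_norm_coef).symm
      _ ≤ ((2 * Real.pi)⁻¹ * ∫ θ : ℝ in (0)..2 * Real.pi, ‖g (circleMap 0 r θ)‖) * |r|⁻¹ ^ k := h1
      _ ≤ M * |r|⁻¹ ^ k := by
          apply mul_le_mul_of_nonneg_right hint (by positivity)
      _ = M / r ^ k := by rw [h3, inv_pow, div_eq_mul_inv]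
  -- sum at 1
  have h1R : (1:ℂ) ∈ Metric.eball (0:ℂ) (R : ENNReal) := by
    rw [EMetric.mem_ball, edist_eq_enorm_sub, sub_zero, enorm_eq_nnnorm]
    have h11 : ‖(1:ℂ)‖₊ = 1 := by simp
    rw [h11]
    exact_mod_cast lt_of_lt_of_le one_lt_two (by exact_mod_cast hr)
  have hs : HasSum (fun k : ℕ => p k fun _ => (1:ℂ)) (g (0 + 1)) := hp.hasSum h1R
  have hs' : HasSum (fun k : ℕ => p.coeff k) (g 1) := by
    rw [zero_add] at hs
    exact hs
  have htsum : ∑' k : ℕ, p.coeff k = g 1 := hs'.tsum_eq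
  have htail : g 1 - p.coeff 0 - p.coeff 1 = ∑' k : ℕ, p.coeff (k + 2) := by
    have h4 := Summable.sum_add_tsum_nat_add (f := fun k => p.coeff k) 2 hs'.summable
    rw [htsum] at h4
    have hrange : (∑ i ∈ Finset.range 2, p.coeff i) = p.coeff 0 + p.coeff 1 := by
      simp [Finset.sum_range_succ]
    rw [hrange] at h4
    rw [← h4]; abel
  -- geometric bound on the tail
  have hq1 : (1/r) < 1 := by
    rw [div_lt_one hr0]; linarith
  have hq0 : (0:ℝ) ≤ 1/r := by positivity
  have hgeo : HasSum (fun k : ℕ => (M / r ^ 2) * (1/r) ^ k)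
      ((M / r ^ 2) * (1 - 1/r)⁻¹) :=
    (hasSum_geometric_of_lt_one hq0 hq1).mul_left _
  have hbd : ∀ k : ℕ, ‖p.coeff (k + 2)‖ ≤ (M / r ^ 2) * (1/r) ^ k := by
    intro k
    have := hcoef (k + 2)
    calc ‖p.coeff (k + 2)‖ ≤ M / r ^ (k + 2) := this
      _ = (M / r ^ 2) * (1/r) ^ k := by
          rw [pow_add, div_mul_eq_div_div_swap, div_eq_mul_inv (M / r ^ 2), one_div, inv_pow]
  have htail_bd : ‖∑' k : ℕ, p.coeff (k + 2)‖ ≤ (M / r ^ 2) * (1 - 1/r)⁻¹ :=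
    tsum_of_norm_bounded hgeo hbd
  -- coeff 0 and coeff 1
  have hc0 : p.coeff 0 = g 0 := by
    exact hp.coeff_zero _
  have hc1 : p.coeff 1 = deriv g 0 := (hp.hasFPowerSeriesAt.deriv).symm
  -- finish
  have hfin : (M / r ^ 2) * (1 - 1/r)⁻¹ ≤ 2 * M / r ^ 2 := by
    have h5 : (1 - 1/r)⁻¹ ≤ 2 := by
      have h6 : (1:ℝ)/2 ≤ 1 - 1/r := by
        have : 1/r ≤ 1/2 := by
          apply div_le_div_of_nonneg_left one_pos.le two_pos hr
        linarith
      calc (1 - 1/r)⁻¹ ≤ ((1:ℝ)/2)⁻¹ := by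
            apply inv_anti₀ (by norm_num) h6
        _ = 2 := by norm_num
    calc (M / r ^ 2) * (1 - 1/r)⁻¹ ≤ (M / r ^ 2) * 2 := by
          apply mul_le_mul_of_nonneg_left h5 (by positivity)
      _ = 2 * M / r ^ 2 := by ring
  calc ‖g 1 - g 0 - deriv g 0‖ = ‖g 1 - p.coeff 0 - p.coeff 1‖ := by rw [hc0, hc1]
    _ = ‖∑' k : ℕ, p.coeff (k + 2)‖ := by rw [htail]
    _ ≤ (M / r ^ 2) * (1 - 1/r)⁻¹ := htail_bd
    _ ≤ 2 * M / r ^ 2 := hfin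

lemma two_point_bound {E F : Type*} [NormedAddCommGroup E] [NormedSpace ℂ E]
    [NormedAddCommGroup F] [NormedSpace ℂ F] [CompleteSpace F]
    {f : E → F} {U : Set E} (hU : IsOpen U) {a : E} {ε M : ℝ} (hε : 0 < ε)
    (h3 : closedBall a (3 * ε) ⊆ U) (hd : DifferentiableOn ℂ f U)
    (hM : ∀ z ∈ closedBall a (3 * ε), ‖f z‖ ≤ M)
    {x y : E} (hx : x ∈ ball a (ε / 4)) (hy : y ∈ ball a (ε / 4)) :
    ‖f x - f y - fderiv ℂ f y (x - y)‖ ≤ (2 * M / ε ^ 2) * ‖x - y‖ ^ 2 := by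
  have hM0 : 0 ≤ M :=
    le_trans (norm_nonneg _) (hM a (mem_closedBall_self (by positivity)))
  rcases eq_or_ne x y with rfl | hxy
  · simp
  have hxa : ‖x - a‖ < ε / 4 := by rwa [mem_ball, dist_eq_norm] at hx
  have hya : ‖y - a‖ < ε / 4 := by rwa [mem_ball, dist_eq_norm] at hy
  set v := x - y with hv
  have hv0 : v ≠ 0 := sub_ne_zero.mpr hxy
  have hvn : 0 < ‖v‖ := norm_pos_iff.mpr hv0
  have hvε : ‖v‖ < ε / 2 := by
    calc ‖v‖ = ‖(x - a) - (y - a)‖ := by rw [hv, sub_sub_sub_cancel_right]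
      _ ≤ ‖x - a‖ + ‖y - a‖ := norm_sub_le _ _
      _ < ε / 4 + ε / 4 := add_lt_add hxa hya
      _ = ε / 2 := by ring
  set r : ℝ := ε / ‖v‖ with hrdef
  have hr2 : 2 ≤ r := by
    rw [hrdef, le_div_iff₀ hvn]
    linarith
  have hrv : r * ‖v‖ = ε := div_mul_cancel₀ ε hvn.ne'
  set l : ℂ → E := fun t => y + t • v with hldef
  have hmaps : ∀ t ∈ closedBall (0:ℂ) r, l t ∈ closedBall a (3 * ε) := by
    intro t ht
    rw [mem_closedBall, dist_eq_norm] at ht ⊢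
    rw [sub_zero] at ht
    calc ‖y + t • v - a‖ = ‖(y - a) + t • v‖ := by rw [add_sub_right_comm]
      _ ≤ ‖y - a‖ + ‖t • v‖ := norm_add_le _ _
      _ = ‖y - a‖ + ‖t‖ * ‖v‖ := by rw [norm_smul]
      _ ≤ ε / 4 + r * ‖v‖ := by
          apply add_le_add hya.le
          exact mul_le_mul_of_nonneg_right ht hvn.le
      _ = ε / 4 + ε := by rw [hrv]
      _ ≤ 3 * ε := by linarith
  have hldiff : Differentiable ℂ l := by
    apply Differentiable.const_add
    exact differentiable_id.smul_const v
  set g : ℂ → F := f ∘ l with hgdef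
  have hdg : DifferentiableOn ℂ g (closedBall 0 r) := by
    apply hd.comp hldiff.differentiableOn
    intro t ht
    exact h3 (hmaps t ht)
  have hMg : ∀ t ∈ closedBall (0:ℂ) r, ‖g t‖ ≤ M := fun t ht => hM _ (hmaps t ht)
  have hyU : y ∈ U := h3 (ball_subset_closedBall (mem_ball.mpr (lt_of_lt_of_le (mem_ball.mp hy) (by linarith))))
  have hfy : DifferentiableAt ℂ f y := hd.differentiableAt (hU.mem_nhds hyU)
  have hl0 : l 0 = y := by simp [hldef]
  have hlder : HasDerivAt l v 0 := by
    have h1 : HasDerivAt (fun t : ℂ => t • v) ((1:ℂ) • v) 0 :=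
      (hasDerivAt_id (0:ℂ)).smul_const v
    rw [one_smul] at h1
    exact h1.const_add y
  have hfy' : HasFDerivAt f (fderiv ℂ f y) (l 0) := by rw [hl0]; exact hfy.hasFDerivAt
  have hgder : HasDerivAt g (fderiv ℂ f y v) 0 := hfy'.comp_hasDerivAt 0 hlder
  have key := slice_bound hr2 hdg hMg
  have hg1 : g 1 = f x := by
    have : l 1 = x := by rw [hldef]; simp [hv]
    simp only [hgdef, Function.comp_apply, this]
  have hg0 : g 0 = f y := by simp only [hgdef, Function.comp_apply, hl0]
  have hderiv : deriv g 0 = fderiv ℂ f y v := hgder.deriv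
  rw [hg1, hg0, hderiv] at key
  have hrw : 2 * M / r ^ 2 = (2 * M / ε ^ 2) * ‖v‖ ^ 2 := by
    rw [hrdef]
    field_simp
  rw [hrw] at key
  exact key

lemma quad_bound_exists {E F : Type*} [NormedAddCommGroup E] [NormedSpace ℂ E]
    [ProperSpace E] [NormedAddCommGroup F] [NormedSpace ℂ F] [CompleteSpace F]
    {f : E → F} {U : Set E} (hU : IsOpen U) (hd : DifferentiableOn ℂ f U)
    {a : E} (ha : a ∈ U) :
    ∃ δ > 0, ∃ K ≥ (0:ℝ), ball a δ ⊆ U ∧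
      ∀ x ∈ ball a δ, ∀ y ∈ ball a δ,
        ‖f x - f y - fderiv ℂ f y (x - y)‖ ≤ K * ‖x - y‖ ^ 2 := by
  obtain ⟨ε', hε', hsub⟩ := (Metric.nhds_basis_closedBall.mem_iff).mp (hU.mem_nhds ha)
  set ε := ε' / 3 with hεdef
  have hε : 0 < ε := by positivity
  have h3 : closedBall a (3 * ε) ⊆ U := by
    have : 3 * ε = ε' := by rw [hεdef]; ring
    rwa [this]
  obtain ⟨M, hM⟩ := (isCompact_closedBall a (3 * ε)).exists_bound_of_continuousOn
    (hd.continuousOn.mono h3)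
  have hM0 : 0 ≤ M := le_trans (norm_nonneg _) (hM a (mem_closedBall_self (by positivity)))
  refine ⟨ε / 4, by positivity, 2 * M / ε ^ 2, by positivity, ?_, ?_⟩
  · exact fun z hz => h3 (ball_subset_closedBall.trans
      (closedBall_subset_closedBall (by linarith)) hz)
  · intro x hx y hy
    exact two_point_bound hU hε h3 hd hM hx hy

lemma fderiv_continuousAt_of_diffOn {E F : Type*} [NormedAddCommGroup E] [NormedSpace ℂ E]
    [ProperSpace E] [NormedAddCommGroup F] [NormedSpace ℂ F] [CompleteSpace F]
    {f : E → F} {U : Set E} (hU : IsOpen U) (hd : DifferentiableOn ℂ f U)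
    {a : E} (ha : a ∈ U) :
    ContinuousAt (fun z => fderiv ℂ f z) a := by
  obtain ⟨δ, hδ, K, hK, hBU, hquad⟩ := quad_bound_exists hU hd ha
  rw [Metric.continuousAt_iff]
  intro η hη
  -- uniform continuity of f on closedBall a (δ/2)
  have hsub2 : closedBall a (δ / 2) ⊆ U := fun z hz => hBU
    (lt_of_le_of_lt (mem_closedBall.mp hz) (by linarith))
  have hunif := ((isCompact_closedBall a (δ / 2)).uniformContinuousOn_of_continuous
    (hd.continuousOn.mono hsub2))
  set d : ℝ := min (δ / 4) (η / (16 * (K + 1))) with hddef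
  have hd0 : 0 < d := lt_min (by positivity) (by positivity)
  have hd4 : d ≤ δ / 4 := min_le_left _ _
  have hK1 : (0:ℝ) < K + 1 := by linarith
  have hdη : 2 * (K + 1) * d ≤ η / 8 := by
    have h0 : d ≤ η / (16 * (K + 1)) := min_le_right _ _
    calc 2 * (K + 1) * d ≤ 2 * (K + 1) * (η / (16 * (K + 1))) := by
          exact mul_le_mul_of_nonneg_left h0 (by positivity)
      _ = η / 8 := by field_simp; ring
  obtain ⟨θ, hθ0, hθ⟩ := (Metric.uniformContinuousOn_iff.mp hunif) (d * η / 8) (by positivity)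
  refine ⟨min d θ, lt_min hd0 hθ0, ?_⟩
  intro y hya
  have hyd : dist y a < d := lt_of_lt_of_le hya (min_le_left _ _)
  have hyθ : dist y a < θ := lt_of_lt_of_le hya (min_le_right _ _)
  rw [dist_eq_norm]
  -- show opnorm bound
  have hop : ∀ w : E, ‖w‖ = d → ‖(fderiv ℂ f y - fderiv ℂ f a) w‖ ≤ (η / 2) * d := by
    intro w hw
    have hyball : y ∈ ball a δ := mem_ball.mpr (lt_of_lt_of_le hyd (by linarith))
    have hywball : y + w ∈ ball a δ := by
      rw [mem_ball, dist_eq_norm, add_sub_right_comm]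
      calc ‖y - a + w‖ ≤ ‖y - a‖ + ‖w‖ := norm_add_le _ _
        _ < d + d := by
            apply add_lt_add_of_lt_of_le _ hw.le
            rwa [← dist_eq_norm]
        _ ≤ δ / 2 := by linarith
        _ < δ := by linarith
    have haball : a ∈ ball a δ := mem_ball_self hδ
    have hawball : a + w ∈ ball a δ := by
      rw [mem_ball, dist_eq_norm, add_sub_cancel_left]
      rw [hw]; linarith
    have hA := hquad (y + w) hywball y hyball
    have hB := hquad (a + w) hawball a haball
    rw [add_sub_cancel_left] at hA hB
    -- uniform continuity terms
    have hyc : y ∈ closedBall a (δ / 2) := by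
      rw [mem_closedBall]
      calc dist y a ≤ d := hyd.le
        _ ≤ δ / 2 := by linarith
    have hac : a ∈ closedBall a (δ / 2) := mem_closedBall_self (by linarith)
    have hywc : y + w ∈ closedBall a (δ / 2) := by
      rw [mem_closedBall, dist_eq_norm, add_sub_right_comm]
      calc ‖y - a + w‖ ≤ ‖y - a‖ + ‖w‖ := norm_add_le _ _
        _ ≤ d + d := by
            apply add_le_add _ hw.le
            rw [← dist_eq_norm]; exact hyd.le
        _ ≤ δ / 2 := by linarith
    have hawc : a + w ∈ closedBall a (δ / 2) := by
      rw [mem_closedBall, dist_eq_norm, add_sub_cancel_left, hw]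
      linarith
    have hu1 : dist (f (y + w)) (f (a + w)) < d * η / 8 := by
      apply hθ _ hywc _ hawc
      rw [dist_eq_norm, add_sub_add_right_eq_sub, ← dist_eq_norm]
      exact hyθ
    have hu2 : dist (f y) (f a) < d * η / 8 := hθ _ hyc _ hac hyθ
    -- combine
    have hiden : (fderiv ℂ f y - fderiv ℂ f a) w =
        (f (y + w) - f (a + w)) - (f y - f a)
        - (f (y + w) - f y - fderiv ℂ f y w)
        + (f (a + w) - f a - fderiv ℂ f a w) := by
      simp only [ContinuousLinearMap.sub_apply]
      abel
    rw [hiden]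
    have hKd : K * ‖w‖ ^ 2 ≤ (η / 8) * d := by
      rw [hw]
      calc K * d ^ 2 = (K * d) * d := by ring
        _ ≤ (η / 8) * d := by
            apply mul_le_mul_of_nonneg_right _ hd0.le
            nlinarith
    calc ‖(f (y + w) - f (a + w)) - (f y - f a)
        - (f (y + w) - f y - fderiv ℂ f y w)
        + (f (a + w) - f a - fderiv ℂ f a w)‖
        ≤ ‖(f (y + w) - f (a + w)) - (f y - f a)
          - (f (y + w) - f y - fderiv ℂ f y w)‖
          + ‖f (a + w) - f a - fderiv ℂ f a w‖ := norm_add_le _ _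
      _ ≤ ‖(f (y + w) - f (a + w)) - (f y - f a)‖
          + ‖f (y + w) - f y - fderiv ℂ f y w‖
          + ‖f (a + w) - f a - fderiv ℂ f a w‖ := by
            apply add_le_add_left (norm_sub_le _ _)
      _ ≤ (‖f (y + w) - f (a + w)‖ + ‖f y - f a‖)
          + ‖f (y + w) - f y - fderiv ℂ f y w‖
          + ‖f (a + w) - f a - fderiv ℂ f a w‖ := by
            apply add_le_add_left (add_le_add_left (norm_sub_le _ _) _)
      _ ≤ (d * η / 8 + d * η / 8) + (η / 8) * d + (η / 8) * d := by
            apply add_le_add (add_le_add _ (le_trans hA hKd)) (le_trans hB hKd)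
            apply add_le_add
            · rw [← dist_eq_norm]; exact hu1.le
            · rw [← dist_eq_norm]; exact hu2.le
      _ = (η / 2) * d := by ring
  -- opnorm
  have hopnorm : ‖fderiv ℂ f y - fderiv ℂ f a‖ ≤ η / 2 := by
    apply ContinuousLinearMap.opNorm_le_bound _ (by positivity)
    intro v
    rcases eq_or_ne v 0 with rfl | hv0
    · simp
    · have hvn : 0 < ‖v‖ := norm_pos_iff.mpr hv0
      set c : ℝ := d / ‖v‖ with hcdef
      have hc0 : 0 < c := by positivity
      set w : E := (c : ℂ) • v with hwdef
      have hwn : ‖w‖ = d := by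
        rw [hwdef, norm_smul, Complex.norm_real, Real.norm_eq_abs, abs_of_pos hc0, hcdef,
          div_mul_cancel₀ _ hvn.ne']
      have hTw := hop w hwn
      rw [hwdef, map_smul, norm_smul, Complex.norm_real, Real.norm_eq_abs,
        abs_of_pos hc0] at hTw
      have hd' : d = c * ‖v‖ := by rw [hcdef]; field_simp
      rw [hd'] at hTw
      rw [show η / 2 * (c * ‖v‖) = c * (η / 2 * ‖v‖) by ring] at hTw
      exact (mul_le_mul_iff_right₀ hc0).mp hTw
  calc ‖(fun z => fderiv ℂ f z) y - fderiv ℂ f a‖ = ‖fderiv ℂ f y - fderiv ℂ f a‖ := rfl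
    _ ≤ η / 2 := hopnorm
    _ < η := by linarith

lemma hasStrictFDerivAt_of_diffOn {E F : Type*} [NormedAddCommGroup E] [NormedSpace ℂ E]
    [ProperSpace E] [NormedAddCommGroup F] [NormedSpace ℂ F] [CompleteSpace F]
    {f : E → F} {U : Set E} (hU : IsOpen U) (hd : DifferentiableOn ℂ f U)
    {a : E} (ha : a ∈ U) :
    HasStrictFDerivAt f (fderiv ℂ f a) a := by
  obtain ⟨δ, hδ, K, hK, hBU, hquad⟩ := quad_bound_exists hU hd ha
  have hcont := fderiv_continuousAt_of_diffOn hU hd ha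
  rw [hasStrictFDerivAt_iff_isLittleO, Asymptotics.isLittleO_iff]
  intro c hc
  have hK1 : (0:ℝ) < K + 1 := by linarith
  set s : ℝ := min δ (c / (4 * (K + 1))) with hsdef
  have hs0 : 0 < s := lt_min hδ (by positivity)
  have hsδ : s ≤ δ := min_le_left _ _
  have hsc : s ≤ c / (4 * (K + 1)) := min_le_right _ _
  have h1 : ∀ᶠ y in 𝓝 a, dist (fderiv ℂ f y) (fderiv ℂ f a) < c / 2 :=
    Metric.tendsto_nhds.mp hcont (c / 2) (by positivity)
  have hball : ∀ᶠ y in 𝓝 a, y ∈ ball a s :=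
    Filter.eventually_of_mem (ball_mem_nhds a hs0) fun y hy => hy
  have hprod : ∀ᶠ p : E × E in 𝓝 (a, a),
      p.1 ∈ ball a s ∧ p.2 ∈ ball a s ∧
        dist (fderiv ℂ f p.2) (fderiv ℂ f a) < c / 2 := by
    rw [nhds_prod_eq]
    exact (hball.prod_inl _).and ((hball.and h1).prod_inr _)
  filter_upwards [hprod] with p hp
  obtain ⟨hx, hy, hdist⟩ := hp
  set x := p.1 with hxdef
  set y := p.2 with hydef
  have hxδ : x ∈ ball a δ := ball_subset_ball hsδ hx
  have hyδ : y ∈ ball a δ := ball_subset_ball hsδ hy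
  have hxy : ‖x - y‖ ≤ 2 * s := by
    calc ‖x - y‖ = ‖(x - a) - (y - a)‖ := by rw [sub_sub_sub_cancel_right]
      _ ≤ ‖x - a‖ + ‖y - a‖ := norm_sub_le _ _
      _ ≤ s + s := by
          apply add_le_add
          · rw [← dist_eq_norm]; exact (mem_ball.mp hx).le
          · rw [← dist_eq_norm]; exact (mem_ball.mp hy).le
      _ = 2 * s := by ring
  have hquadxy := hquad x hxδ y hyδ
  have hKxy : K * ‖x - y‖ ^ 2 ≤ (c / 2) * ‖x - y‖ := by
    calc K * ‖x - y‖ ^ 2 = (K * ‖x - y‖) * ‖x - y‖ := by ring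
      _ ≤ (c / 2) * ‖x - y‖ := by
          apply mul_le_mul_of_nonneg_right _ (norm_nonneg _)
          calc K * ‖x - y‖ ≤ K * (2 * s) := mul_le_mul_of_nonneg_left hxy hK
            _ ≤ K * (2 * (c / (4 * (K + 1)))) := by
                apply mul_le_mul_of_nonneg_left _ hK
                linarith
            _ = (K / (K + 1)) * (c / 2) := by field_simp; ring
            _ ≤ 1 * (c / 2) := by
                apply mul_le_mul_of_nonneg_right _ (by positivity)
                rw [div_le_one hK1]; linarith
            _ = c / 2 := one_mul _
  have hiden : f x - f y - fderiv ℂ f a (x - y) =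
      (f x - f y - fderiv ℂ f y (x - y)) + ((fderiv ℂ f y - fderiv ℂ f a) (x - y)) := by
    simp only [ContinuousLinearMap.sub_apply]
    abel
  calc ‖f x - f y - fderiv ℂ f a (x - y)‖
      ≤ ‖f x - f y - fderiv ℂ f y (x - y)‖ + ‖(fderiv ℂ f y - fderiv ℂ f a) (x - y)‖ := by
        rw [hiden]; exact norm_add_le _ _
    _ ≤ (c / 2) * ‖x - y‖ + ‖fderiv ℂ f y - fderiv ℂ f a‖ * ‖x - y‖ := by
        apply add_le_add (le_trans hquadxy hKxy)
        exact ContinuousLinearMap.le_opNorm _ _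
    _ ≤ (c / 2) * ‖x - y‖ + (c / 2) * ‖x - y‖ := by
        apply add_le_add_right
        apply mul_le_mul_of_nonneg_right _ (norm_nonneg _)
        rw [← dist_eq_norm]
        exact hdist.le
    _ = c * ‖x - y‖ := by ring

/-- Local linearization of a holomorphic retraction (H. Cartan). -/
theorem holomorphic_retraction_locally_linear
    {n : ℕ} (U : Set (Fin n → ℂ)) (hU : IsOpen U)
    (ρ : (Fin n → ℂ) → (Fin n → ℂ))
    (hρ : DifferentiableOn ℂ ρ U) (hρm : MapsTo ρ U U)
    (hretr : ∀ z ∈ U, ρ (ρ z) = ρ z)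
    (z₀ : Fin n → ℂ) (hz₀ : z₀ ∈ U) (hfix : ρ z₀ = z₀) :
    ∃ (W : Set (Fin n → ℂ)) (u uinv : (Fin n → ℂ) → (Fin n → ℂ))
      (P : (Fin n → ℂ) →L[ℂ] (Fin n → ℂ)),
      IsOpen W ∧ z₀ ∈ W ∧ W ⊆ U ∧
      u z₀ = 0 ∧
      DifferentiableOn ℂ u W ∧
      IsOpen (u '' W) ∧
      DifferentiableOn ℂ uinv (u '' W) ∧
      (∀ z ∈ W, uinv (u z) = z) ∧
      (∀ y ∈ u '' W, u (uinv y) = y) ∧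
      P ∘L P = P ∧
      (∀ z ∈ W, u (ρ z) = P (u z)) ∧
      (∀ z ∈ W, (ρ z = z ↔ P (u z) = u z)) := by
  have hρz₀ : DifferentiableAt ℂ ρ z₀ := hρ.differentiableAt (hU.mem_nhds hz₀)
  set P₁ :(Fin n → ℂ) →L[ℂ] (Fin n → ℂ) := fderiv ℂ ρ z₀ with hP₁def
  -- idempotency of P₁
  have hidem : P₁ ∘L P₁ = P₁ := by
    have hev : (fun z => ρ (ρ z)) =ᶠ[𝓝 z₀] ρ :=
      Filter.eventuallyEq_of_mem (hU.mem_nhds hz₀) hretr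
    have h1 : fderiv ℂ (fun z => ρ (ρ z)) z₀ = P₁ ∘L P₁ := by
      have hc := fderiv_comp (𝕜 := ℂ) z₀ (by rw [hfix]; exact hρz₀) hρz₀
      rw [hfix] at hc
      exact hc
    have h2 : fderiv ℂ (fun z => ρ (ρ z)) z₀ = P₁ := hev.fderiv_eq
    rw [h1] at h2
    exact h2
  have happ : ∀ x : Fin n → ℂ, P₁ (P₁ x) = P₁ x := fun x => ContinuousLinearMap.ext_iff.mp hidem x
  -- the chart
  set u : (Fin n → ℂ) → (Fin n → ℂ) := fun z => z - ρ z + P₁ (ρ z + ρ z - z₀ - z) with hudef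
  have huz₀ : u z₀ = 0 := by
    show z₀ - ρ z₀ + P₁ (ρ z₀ + ρ z₀ - z₀ - z₀) = 0
    rw [hfix]
    have h00 : z₀ + z₀ - z₀ - z₀ = 0 := by abel
    rw [h00, map_zero, sub_self, add_zero]
  have hdu : DifferentiableOn ℂ u U := by
    apply DifferentiableOn.add
    · exact differentiable_id.differentiableOn.sub hρ
    · apply Differentiable.comp_differentiableOn P₁.differentiable
      exact ((hρ.add hρ).sub (differentiableOn_const z₀)).sub differentiable_id.differentiableOn
  -- derivative of u at z₀ is the identity
  have hfd0 : HasFDerivAt u (ContinuousLinearMap.id ℂ (Fin n → ℂ)) z₀ := by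
    have hinner : HasFDerivAt (fun z => ρ z + ρ z - z₀ - z)
        (P₁ + P₁ - ContinuousLinearMap.id ℂ (Fin n → ℂ)) z₀ :=
      ((hρz₀.hasFDerivAt.add hρz₀.hasFDerivAt).sub_const z₀).sub (hasFDerivAt_id z₀)
    have hcomp : HasFDerivAt (fun z => P₁ (ρ z + ρ z - z₀ - z))
        (P₁ ∘L (P₁ + P₁ - ContinuousLinearMap.id ℂ (Fin n → ℂ))) z₀ :=
      P₁.hasFDerivAt.comp z₀ hinner
    have htot := ((hasFDerivAt_id z₀).sub hρz₀.hasFDerivAt).add hcomp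
    have heq : ContinuousLinearMap.id ℂ (Fin n → ℂ) - P₁ + P₁ ∘L (P₁ + P₁ - ContinuousLinearMap.id ℂ (Fin n → ℂ))
        = ContinuousLinearMap.id ℂ (Fin n → ℂ) := by
      refine ContinuousLinearMap.ext fun x => ?_
      simp only [ContinuousLinearMap.add_apply, ContinuousLinearMap.sub_apply,
        ContinuousLinearMap.comp_apply, ContinuousLinearMap.id_apply, map_add, map_sub, happ]
      abel
    rw [heq] at htot
    exact htot
  have hfderiv_z₀ : fderiv ℂ u z₀ = ContinuousLinearMap.id ℂ (Fin n → ℂ) := hfd0.fderiv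
  have hstrict : HasStrictFDerivAt u
      ((ContinuousLinearEquiv.refl ℂ (Fin n → ℂ) : (Fin n → ℂ) ≃L[ℂ] (Fin n → ℂ)) :(Fin n → ℂ) →L[ℂ] (Fin n → ℂ)) z₀ := by
    have h := hasStrictFDerivAt_of_diffOn hU hdu hz₀
    rw [hfderiv_z₀] at h
    rw [ContinuousLinearEquiv.coe_refl]
    exact h
  set φ := hstrict.toOpenPartialHomeomorph u with hφdef
  have hφcoe : ⇑φ = u := hstrict.toOpenPartialHomeomorph_coe
  have hsrc : z₀ ∈ φ.source := hstrict.mem_toOpenPartialHomeomorph_source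
  -- continuity of the derivative of u
  have hcofd : ContinuousOn (fun z => fderiv ℂ u z) U := fun z hz =>
    (fderiv_continuousAt_of_diffOn hU hdu hz).continuousWithinAt
  have hΩopen : IsOpen (U ∩ (fun z => fderiv ℂ u z) ⁻¹' {T :(Fin n → ℂ) →L[ℂ] (Fin n → ℂ) | IsUnit T}) :=
    hcofd.isOpen_inter_preimage hU Units.isOpen
  have hΩz₀ : z₀ ∈ U ∩ (fun z => fderiv ℂ u z) ⁻¹' {T :(Fin n → ℂ) →L[ℂ] (Fin n → ℂ) | IsUnit T} := by
    refine ⟨hz₀, ?_⟩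
    simp only [mem_preimage, mem_setOf_eq, hfderiv_z₀]
    exact ⟨1, rfl⟩
  -- the neighborhood W
  set W : Set (Fin n → ℂ) := (U ∩ ρ ⁻¹' φ.source) ∩
      (φ.source ∩ (U ∩ (fun z => fderiv ℂ u z) ⁻¹' {T :(Fin n → ℂ) →L[ℂ] (Fin n → ℂ) | IsUnit T})) with hWdef
  have hWopen : IsOpen W :=
    (hρ.continuousOn.isOpen_inter_preimage hU φ.open_source).inter
      (φ.open_source.inter hΩopen)
  have hz₀W : z₀ ∈ W := by
    refine ⟨⟨hz₀, ?_⟩, hsrc, hΩz₀⟩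
    simp only [mem_preimage, hfix]
    exact hsrc
  have hWU : W ⊆ U := fun z hz => hz.1.1
  have hWsrc : W ⊆ φ.source := fun z hz => hz.2.1
  have himg : u '' W = ⇑φ '' W := by rw [hφcoe]
  have himgopen : IsOpen (u '' W) := by
    rw [himg]
    exact φ.isOpen_image_of_subset_source hWopen hWsrc
  -- strict differentiability at each point of W, with invertible derivative
  have hstrictW : ∀ z ∈ W, ∃ e : (Fin n → ℂ) ≃L[ℂ] (Fin n → ℂ),
      (e :(Fin n → ℂ) →L[ℂ] (Fin n → ℂ)) = fderiv ℂ u z ∧ HasStrictFDerivAt u (e :(Fin n → ℂ) →L[ℂ] (Fin n → ℂ)) z := by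
    intro z hz
    have hunit : IsUnit (fderiv ℂ u z) := hz.2.2.2
    refine ⟨ContinuousLinearEquiv.unitsEquiv ℂ (Fin n → ℂ) hunit.unit, ?_, ?_⟩
    · refine ContinuousLinearMap.ext fun x => ?_
      simp only [ContinuousLinearEquiv.coe_coe, ContinuousLinearEquiv.unitsEquiv_apply,
        IsUnit.unit_spec]
    · have h := hasStrictFDerivAt_of_diffOn hU hdu (hWU hz)
      have hcoe : ((ContinuousLinearEquiv.unitsEquiv ℂ (Fin n → ℂ) hunit.unit : (Fin n → ℂ) ≃L[ℂ] (Fin n → ℂ)) :(Fin n → ℂ) →L[ℂ] (Fin n → ℂ))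
          = fderiv ℂ u z := by
        refine ContinuousLinearMap.ext fun x => ?_
        simp only [ContinuousLinearEquiv.coe_coe, ContinuousLinearEquiv.unitsEquiv_apply,
          IsUnit.unit_spec]
      rw [hcoe]
      exact h
  -- inverse differentiability
  have hdinv : DifferentiableOn ℂ (⇑φ.symm) (u '' W) := by
    rintro y ⟨z, hzW, rfl⟩
    obtain ⟨e, hecoe, hstr⟩ := hstrictW z hzW
    have hzsrc := hWsrc hzW
    have hyt : u z ∈ φ.target := by
      rw [← hφcoe]
      exact φ.map_source hzsrc
    have hsymm : φ.symm (u z) = z := by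
      rw [← hφcoe]
      exact φ.left_inv hzsrc
    have hstr' : HasStrictFDerivAt (⇑φ) (e :(Fin n → ℂ) →L[ℂ] (Fin n → ℂ)) (φ.symm (u z)) := by
      rw [hsymm, hφcoe]
      exact hstr
    exact (φ.hasStrictFDerivAt_symm hyt hstr').differentiableAt.differentiableWithinAt
  -- conjugation identity
  have hconj : ∀ z ∈ W, u (ρ z) = P₁ (u z) := by
    intro z hz
    have hzU := hWU hz
    have hr := hretr z hzU
    show ρ z - ρ (ρ z) + P₁ (ρ (ρ z) + ρ (ρ z) - z₀ - ρ z)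
        = P₁ (z - ρ z + P₁ (ρ z + ρ z - z₀ - z))
    rw [hr]
    simp only [map_add, map_sub, happ]
    abel
  refine ⟨W, u, ⇑φ.symm, P₁, hWopen, hz₀W, hWU, huz₀, hdu.mono hWU, himgopen, hdinv,
    ?_, ?_, hidem, hconj, ?_⟩
  · intro z hz
    rw [← hφcoe]
    exact φ.left_inv (hWsrc hz)
  · rintro y ⟨z, hz, rfl⟩
    rw [← hφcoe]
    exact φ.right_inv (φ.map_source (hWsrc hz))
  · intro z hz
    constructor
    · intro hzz
      rw [← hconj z hz, hzz]
    · intro hP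
      have h6 : u (ρ z) = u z := by rw [hconj z hz, hP]
      have hρsrc : ρ z ∈ φ.source := hz.1.2
      apply φ.injOn hρsrc (hWsrc hz)
      rw [hφcoe]
      exact h6
end

section
/- Let B be the open unit ball of ℂⁿ for a norm ‖·‖ and let v ∈ ∂B be a complex extreme point of the closed ball. If φ: Δ → closure(B) is holomorphic with φ(0) = 0 and φ'(0) = v, then φ(ζ) = ζ·v for all ζ ∈ Δ. -/
open Complex Metric Set MeasureTheory intervalIntegral

private lemma zpow_circleMap_integral_eq_zero (r : ℝ) (k : ℤ) (hk : k ≠ 0) :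
    ∫ θ in (0:ℝ)..(2*Real.pi), (circleMap 0 r θ) ^ k = 0 := by
  have h1 : ∀ θ : ℝ, (circleMap 0 r θ) ^ k = (r:ℂ)^k * Complex.exp ((k * I) * θ) := by
    intro θ
    rw [circleMap, zero_add, mul_zpow]
    congr 1
    rw [← Complex.exp_int_mul]
    ring_nf
  simp_rw [h1]
  rw [intervalIntegral.integral_const_mul]
  rw [integral_exp_mul_complex (by simp [I_ne_zero, hk] : (k*I : ℂ) ≠ 0)]
  have : Complex.exp (k * I * (2*Real.pi)) = 1 := by
    rw [show (k * I * (2*Real.pi) : ℂ) = k * (2 * Real.pi * I) by ring]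
    exact Complex.exp_int_mul_two_pi_mul_I k
  simp [this]

/-- Uniqueness of the complex geodesic through the origin in the direction of a
complex extreme point of the closed unit ball. -/
theorem geodesic_through_complex_extreme_point_unique
    {E : Type*} [NormedAddCommGroup E] [NormedSpace ℂ E] [FiniteDimensional ℂ E]
    (v : E) (hv : ‖v‖ = 1)
    (hext : ∀ y : E, (∀ ζ : ℂ, ‖ζ‖ < 1 → v + ζ • y ∈ closedBall (0 : E) 1)
      → y = 0)
    (φ : ℂ → E)
    (hφ : DifferentiableOn ℂ φ (ball 0 1))
    (hφm : MapsTo φ (ball 0 1) (closedBall (0 : E) 1))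
    (hφ0 : φ 0 = 0) (hφ' : deriv φ 0 = v) :
    ∀ ζ ∈ ball (0 : ℂ) 1, φ ζ = ζ • v := by
  set g : ℂ → E := dslope φ 0 with hgdef
  have h0mem : (0:ℂ) ∈ ball (0:ℂ) 1 := mem_ball_self one_pos
  have hgd : DifferentiableOn ℂ g (ball 0 1) := by
    rw [hgdef, differentiableOn_dslope (isOpen_ball.mem_nhds h0mem)]
    exact hφ
  have hg0 : g 0 = v := by rw [hgdef, dslope_same, hφ']
  have hgle : ∀ z ∈ ball (0:ℂ) 1, ‖g z‖ ≤ 1 := by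
    intro z hz
    refine le_of_forall_pos_le_add fun ε hε => ?_
    have hmaps : MapsTo φ (ball 0 1) (closedBall (φ 0) (1 + ε)) := by
      intro x hx
      have := hφm hx
      rw [hφ0]
      rw [mem_closedBall] at this
      rw [mem_closedBall]
      linarith
    have := Complex.norm_dslope_le_div_of_mapsTo_ball hφ hmaps hz
    simpa using this
  -- Main step : `g` is constantly `v` on every ball of radius `r < 1`.
  have hconst : ∀ r : ℝ, 0 < r → r < 1 → ∀ z ∈ ball (0:ℂ) r, g z = v := by
    intro r hr hr1
    have hrne : r ≠ 0 := hr.ne'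
    have hsub : closedBall (0:ℂ) r ⊆ ball 0 1 := closedBall_subset_ball hr1
    have hgC : ContinuousOn g (closedBall (0:ℂ) r) := (hgd.mono hsub).continuousOn
    have hcm : ∀ θ : ℝ, circleMap 0 r θ ≠ 0 := fun θ => circleMap_ne_center hrne
    have hgc : Continuous (fun θ : ℝ => g (circleMap 0 r θ)) := by
      apply hgC.comp_continuous (continuous_circleMap 0 r)
      intro θ
      simp [abs_of_pos hr, hr.le]
    have hcont : ∀ k : ℤ,
        Continuous (fun θ : ℝ => (circleMap 0 r θ) ^ k • g (circleMap 0 r θ)) := by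
      intro k
      exact ((continuous_circleMap 0 r).zpow₀ k (fun θ => Or.inl (hcm θ))).smul hgc
    -- positive frequencies integrate to zero (Cauchy-Goursat)
    have hJp : ∀ n : ℕ, 1 ≤ n →
        (∫ θ in (0:ℝ)..(2*Real.pi), (circleMap 0 r θ) ^ (n:ℤ) • g (circleMap 0 r θ)) = 0 := by
      intro n hn
      have hdg : ∀ z ∈ ball (0:ℂ) r, DifferentiableAt ℂ g z := fun z hz =>
        hgd.differentiableAt (isOpen_ball.mem_nhds (ball_subset_ball hr1.le hz))
      have hcirc : (∮ z in C(0, r), z ^ (n-1) • g z) = 0 := by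
        apply circleIntegral_eq_zero_of_differentiable_on_off_countable hr.le countable_empty
        · exact (continuousOn_pow (n-1)).smul hgC
        · intro z hz
          exact (differentiableAt_pow (n-1)).smul (hdg z hz.1)
      rw [circleIntegral] at hcirc
      simp only [deriv_circleMap] at hcirc
      have heq : ∀ θ : ℝ, (circleMap 0 r θ * I) • (circleMap 0 r θ ^ (n-1) • g (circleMap 0 r θ))
          = I • ((circleMap 0 r θ) ^ (n:ℤ) • g (circleMap 0 r θ)) := by
        intro θ
        rw [smul_smul, smul_smul]
        congr 1
        rw [← zpow_natCast (circleMap 0 r θ) (n-1)]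
        rw [show ((n-1 : ℕ) : ℤ) = (n:ℤ) - 1 by omega]
        rw [show ((n:ℤ)-1) = -1 + n by ring, zpow_add₀ (hcm θ), mul_right_comm,
          ← mul_assoc, zpow_neg_one, mul_inv_cancel₀ (hcm θ), one_mul, mul_comm]
      simp_rw [heq] at hcirc
      rw [intervalIntegral.integral_smul] at hcirc
      exact (smul_eq_zero_iff_right I_ne_zero).mp hcirc
    -- mean value property
    have hdc : DiffContOnCl ℂ g (ball (0:ℂ) r) :=
      ⟨hgd.mono (ball_subset_ball hr1.le), hgC.mono closure_ball_subset_closedBall⟩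
    have hJ0 : (∫ θ in (0:ℝ)..(2*Real.pi), g (circleMap 0 r θ)) = (2*Real.pi:ℂ) • v := by
      have hcirc := hdc.circleIntegral_sub_inv_smul (mem_ball_self hr)
      rw [circleIntegral] at hcirc
      simp only [deriv_circleMap, sub_zero] at hcirc
      have heq : ∀ θ : ℝ, (circleMap 0 r θ * I) • ((circleMap 0 r θ)⁻¹ • g (circleMap 0 r θ))
          = I • g (circleMap 0 r θ) := by
        intro θ
        rw [smul_smul]
        congr 1
        rw [mul_comm, ← mul_assoc, inv_mul_cancel₀ (hcm θ), one_mul]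
      simp_rw [heq] at hcirc
      rw [intervalIntegral.integral_smul] at hcirc
      have hI : I • ((2 * Real.pi : ℂ) • g 0) = (2 * ↑Real.pi * I) • g 0 := by
        rw [smul_smul]; congr 1; ring
      rw [← hI] at hcirc
      rw [hg0] at hcirc
      exact smul_right_injective E I_ne_zero hcirc
    -- negative frequencies vanish: the extreme point argument
    have hJm : ∀ n : ℕ, 1 ≤ n →
        (∫ θ in (0:ℝ)..(2*Real.pi), (circleMap 0 r θ) ^ (-(n:ℤ)) • g (circleMap 0 r θ)) = 0 := by
      intro n hn
      set Jm : E :=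
        ∫ θ in (0:ℝ)..(2*Real.pi), (circleMap 0 r θ) ^ (-(n:ℤ)) • g (circleMap 0 r θ) with hJmdef
      -- kernel estimate
      have hbound : ∀ μ : ℂ, ‖μ‖ ≤ r ^ n →
          ‖(2*Real.pi:ℂ) • v + (μ/2) • Jm‖ ≤ 2*Real.pi := by
        intro μ hμ
        set e : ℝ → ℂ := circleMap 0 r with he
        set G : ℝ → E := fun θ => g (circleMap 0 r θ) with hG
        set u : ℝ → ℂ := fun θ => μ * (e θ) ^ (-(n:ℤ)) with hu
        set c3 : ℂ := (starRingEnd ℂ) μ / 2 * ((r:ℂ) ^ (2*n))⁻¹ with hc3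
        set W : ℝ → ℂ := fun θ => 1 + (μ/2) * (e θ) ^ (-(n:ℤ)) + c3 * (e θ) ^ (n:ℤ) with hW
        have hconj : ∀ θ, (starRingEnd ℂ) (e θ) = (r:ℂ)^2 * (e θ)⁻¹ := by
          intro θ
          have habs : (‖e θ‖ : ℝ) = r := by
            simp [he, abs_of_pos hr]
          have hmc := Complex.mul_conj (e θ)
          rw [Complex.normSq_eq_norm_sq, habs] at hmc
          field_simp [hcm θ]
          rw [mul_comm] at hmc
          rw [hmc]
          norm_num
        have hWre : ∀ θ, W θ = ((1 + (u θ).re : ℝ) : ℂ) := by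
          intro θ
          have h3 : c3 * (e θ) ^ (n:ℤ) = (starRingEnd ℂ) (u θ) / 2 := by
            rw [hu]
            simp only [map_mul, map_zpow₀, hconj θ]
            rw [hc3]
            have hb : ((r:ℂ)^2 * (e θ)⁻¹)^(-(n:ℤ)) = ((r:ℂ)^(2*n))⁻¹ * (e θ)^(n:ℤ) := by
              rw [mul_zpow, zpow_neg, zpow_neg, inv_zpow, inv_inv, zpow_natCast, ← pow_mul]
            rw [hb]
            ring
          rw [hW]
          simp only
          rw [h3]
          have h2 : (μ/2) * (e θ) ^ (-(n:ℤ)) = u θ / 2 := by rw [hu]; ring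
          rw [h2]
          have hac := Complex.add_conj (u θ)
          push_cast at hac ⊢
          linear_combination hac / 2
        have huabs : ∀ θ, ‖u θ‖ ≤ 1 := by
          intro θ
          rw [hu]
          simp only [norm_mul, norm_zpow]
          rw [show ‖e θ‖ = r by simp [he, abs_of_pos hr]]
          rw [zpow_neg, zpow_natCast]
          rw [mul_inv_le_iff₀ (by positivity)]
          simpa using hμ
        have hWnn : ∀ θ, 0 ≤ 1 + (u θ).re := by
          intro θ
          have h1 : -(1:ℝ) ≤ (u θ).re := by
            have := Complex.abs_re_le_norm (u θ)
            have h2 := huabs θ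
            have := neg_abs_le (u θ).re
            linarith
          linarith
        have hIntEq : (∫ θ in (0:ℝ)..(2*Real.pi), W θ • G θ)
            = (2*Real.pi:ℂ) • v + (μ/2) • Jm := by
          have hexp : ∀ θ, W θ • G θ
              = G θ + (μ/2) • ((e θ) ^ (-(n:ℤ)) • G θ) + c3 • ((e θ) ^ (n:ℤ) • G θ) := by
            intro θ
            rw [hW]
            simp only
            rw [add_smul, add_smul, one_smul, mul_smul, mul_smul]
          simp_rw [hexp]
          rw [intervalIntegral.integral_add, intervalIntegral.integral_add]
          · rw [intervalIntegral.integral_smul, intervalIntegral.integral_smul, hJp n hn, hJ0]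
            rw [smul_zero, add_zero, ← hJmdef]
          · exact hgc.intervalIntegrable _ _
          · exact ((hcont _).const_smul _).intervalIntegrable _ _
          · exact (hgc.intervalIntegrable _ _).add (((hcont _).const_smul _).intervalIntegrable _ _)
          · exact ((hcont _).const_smul _).intervalIntegrable _ _
        rw [← hIntEq]
        calc ‖∫ θ in (0:ℝ)..(2*Real.pi), W θ • G θ‖
            ≤ ∫ θ in (0:ℝ)..(2*Real.pi), ‖W θ • G θ‖ :=
              intervalIntegral.norm_integral_le_integral_norm Real.two_pi_pos.le
          _ ≤ ∫ θ in (0:ℝ)..(2*Real.pi), (1 + (u θ).re) := by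
              apply intervalIntegral.integral_mono_on Real.two_pi_pos.le
              · have hWcont : Continuous W := by
                  refine (continuous_const.add (continuous_const.mul ?_)).add
                    (continuous_const.mul ?_) <;>
                    exact (continuous_circleMap 0 r).zpow₀ _ (fun θ => Or.inl (hcm θ))
                exact (hWcont.smul hgc).norm.intervalIntegrable _ _
              · apply Continuous.intervalIntegrable
                have hcu : Continuous u := continuous_const.mul
                  ((continuous_circleMap 0 r).zpow₀ _ (fun θ => Or.inl (hcm θ)))
                exact continuous_const.add (Complex.continuous_re.comp hcu)
              · intro θ hθ
                rw [norm_smul]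
                have h1 : ‖W θ‖ = 1 + (u θ).re := by
                  rw [hWre θ, Complex.norm_real]
                  exact abs_of_nonneg (hWnn θ)
                rw [h1]
                have h2 : ‖G θ‖ ≤ 1 := by
                  apply hgle
                  rw [mem_ball_zero_iff, norm_circleMap_zero, abs_of_pos hr]
                  exact hr1
                calc (1 + (u θ).re) * ‖G θ‖ ≤ (1 + (u θ).re) * 1 :=
                      mul_le_mul_of_nonneg_left h2 (hWnn θ)
                  _ = 1 + (u θ).re := mul_one _
          _ = 2 * Real.pi := by
              have hofReal : ((∫ θ in (0:ℝ)..(2*Real.pi), (1 + (u θ).re) : ℝ) : ℂ)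
                  = ∫ θ in (0:ℝ)..(2*Real.pi), W θ := by
                rw [← intervalIntegral.integral_ofReal]
                apply intervalIntegral.integral_congr
                intro θ _
                exact (hWre θ).symm
              have hWint : (∫ θ in (0:ℝ)..(2*Real.pi), W θ) = 2*Real.pi := by
                rw [hW]
                simp only
                rw [intervalIntegral.integral_add, intervalIntegral.integral_add]
                · rw [intervalIntegral.integral_const_mul, intervalIntegral.integral_const_mul]
                  rw [zpow_circleMap_integral_eq_zero r _ (by omega : -(n:ℤ) ≠ 0),
                      zpow_circleMap_integral_eq_zero r _
                        (by exact_mod_cast Nat.one_le_iff_ne_zero.mp hn : (n:ℤ) ≠ 0)]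
                  simp [Real.two_pi_pos.le]
                · exact continuous_const.intervalIntegrable _ _
                · apply Continuous.intervalIntegrable
                  exact continuous_const.mul
                    ((continuous_circleMap 0 r).zpow₀ _ (fun θ => Or.inl (hcm θ)))
                · apply IntervalIntegrable.add <;> apply Continuous.intervalIntegrable
                  · exact continuous_const
                  · exact continuous_const.mul
                      ((continuous_circleMap 0 r).zpow₀ _ (fun θ => Or.inl (hcm θ)))
                · apply Continuous.intervalIntegrable
                  exact continuous_const.mul
                    ((continuous_circleMap 0 r).zpow₀ _ (fun θ => Or.inl (hcm θ)))
              have := hofReal.trans hWint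
              exact_mod_cast this
      -- use the extreme point hypothesis
      have hy : ∀ w : ℂ, ‖w‖ < 1 →
          v + w • (((r^n/(4*Real.pi) : ℝ)) : ℂ) • Jm ∈ closedBall (0:E) 1 := by
        intro w hw
        have hμ : ‖w * (r^n : ℝ)‖ ≤ r ^ n := by
          rw [norm_mul]
          rw [Complex.norm_real, Real.norm_eq_abs, abs_of_pos (by positivity)]
          nlinarith [norm_nonneg w, (pow_pos hr n)]
        have hb := hbound (w * (r^n : ℝ)) hμ
        rw [mem_closedBall_zero_iff]
        have hkey : v + w • (((r^n/(4*Real.pi) : ℝ)) : ℂ) • Jm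
            = ((2*Real.pi:ℂ))⁻¹ • ((2*Real.pi:ℂ) • v + ((w * (r^n : ℝ))/2) • Jm) := by
          rw [smul_add, inv_smul_smul₀ (by exact_mod_cast Real.two_pi_pos.ne' : (2*Real.pi:ℂ) ≠ 0)]
          congr 1
          rw [smul_smul, smul_smul]
          congr 1
          have hπ : (Real.pi : ℂ) ≠ 0 := by exact_mod_cast Real.pi_ne_zero
          push_cast
          field_simp
          ring_nf
        rw [hkey, norm_smul]
        have h2π : ‖((2*Real.pi:ℂ))⁻¹‖ = (2*Real.pi)⁻¹ := by
          rw [norm_inv]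
          rw [show (2*Real.pi:ℂ) = ((2*Real.pi : ℝ) : ℂ) by push_cast; ring]
          rw [Complex.norm_real, Real.norm_eq_abs, abs_of_pos Real.two_pi_pos]
        rw [h2π]
        calc (2*Real.pi)⁻¹ * ‖(2*Real.pi:ℂ) • v + ((w * ((r^n : ℝ):ℂ))/2) • Jm‖
            ≤ (2*Real.pi)⁻¹ * (2*Real.pi) :=
              mul_le_mul_of_nonneg_left hb (inv_nonneg.mpr Real.two_pi_pos.le)
          _ = 1 := inv_mul_cancel₀ Real.two_pi_pos.ne'
      have hzero := hext _ hy
      have hcoef : (((r^n/(4*Real.pi) : ℝ)) : ℂ) ≠ 0 := by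
        simp only [ne_eq, Complex.ofReal_eq_zero]
        positivity
      rw [hJmdef] at *
      exact (smul_eq_zero_iff_right hcoef).mp hzero
    -- power series argument
    intro z hz
    rw [← hg0]
    lift r to NNReal using hr.le with R hR
    have hps : HasFPowerSeriesOnBall g (cauchyPowerSeries g 0 R) 0 R :=
      (hgd.mono hsub).hasFPowerSeriesOnBall (by exact_mod_cast hr)
    have hzball : z ∈ Metric.eball (0:ℂ) R := by
      rw [Metric.emetric_ball_nnreal]
      exact hz
    have hsum := hps.hasSum hzball
    rw [zero_add] at hsum
    have h0 : (cauchyPowerSeries g 0 R 0 fun _ => z) = g 0 := by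
      rw [cauchyPowerSeries_apply]
      have hcirc := hdc.circleIntegral_sub_inv_smul (mem_ball_self hr)
      simp only [pow_zero, one_smul]
      rw [hcirc, inv_smul_smul₀]
      simp [Real.pi_ne_zero, I_ne_zero]
    have hterm : ∀ m : ℕ, m ≠ 0 → (cauchyPowerSeries g 0 R m fun _ => z) = 0 := by
      intro m hm
      rw [cauchyPowerSeries_apply]
      rw [circleIntegral]
      simp only [deriv_circleMap, sub_zero]
      have heq : ∀ θ : ℝ, (circleMap 0 R θ * I) •
          ((z / circleMap 0 R θ) ^ m • (circleMap 0 R θ)⁻¹ • g (circleMap 0 R θ))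
          = (z ^ m * I) • ((circleMap 0 R θ) ^ (-(m:ℤ)) • g (circleMap 0 R θ)) := by
        intro θ
        rw [smul_smul, smul_smul, smul_smul]
        congr 1
        rw [div_pow, zpow_neg, zpow_natCast]
        field_simp [hcm θ]
      simp_rw [heq]
      rw [intervalIntegral.integral_smul, hJm m (Nat.one_le_iff_ne_zero.mpr hm), smul_zero,
        smul_zero]
    have := (hasSum_single (f := fun m => cauchyPowerSeries g 0 R m fun _ => z) 0
      (fun b hb => hterm b hb)).unique hsum
    rw [h0] at this
    exact this.symm
  -- conclusion
  intro ζ hζ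
  rcases eq_or_ne ζ 0 with rfl | hne
  · simp [hφ0]
  · have habs : ‖ζ‖ < 1 := by rwa [mem_ball_zero_iff] at hζ
    have hr0 : 0 < (‖ζ‖ + 1)/2 := by positivity
    have hr1 : (‖ζ‖ + 1)/2 < 1 := by linarith
    have hgζ : g ζ = v := by
      apply hconst _ hr0 hr1
      rw [mem_ball_zero_iff]
      linarith
    rw [hgdef, dslope_of_ne _ hne] at hgζ
    rw [slope_def_module, hφ0, sub_zero, sub_zero] at hgζ
    calc φ ζ = ζ • ζ⁻¹ • φ ζ := by rw [smul_smul, mul_inv_cancel₀ hne, one_smul]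
      _ = ζ • v := by rw [hgζ]
end
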